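/- arXiv:1512.06310 — 10 statements merged into one kernel-verified Lean document; each statement's English description precedes it below -/
import Mathlib

section
/- For every integer n ≥ 1, S_{n+2} ≡ S_n + 4 (mod 16). -/
open Finset

/-- The (large) Schröder number `S n = ∑_{k=0}^n C(n,k)·C(n+k,k)/(k+1)`.
Each summand is an integer, so natural division is exact. -/
def schroeder (n : ℕ) : ℕ :=
  ∑ k ∈ Finset.range (n + 1), n.choose k * (n + k).choose k / (k + 1)

/-- Division-free formula for Schröder numbers. -/
def sch (n : ℕ) : ℕ := ∑ k ∈ range (n + 1), (n + k).choose (2 * k) * catalan k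

lemma term_eq (n k : ℕ) (h : k ≤ n) :
    n.choose k * (n + k).choose k / (k + 1) = (n + k).choose (2 * k) * catalan k := by
  have h1 : (n + k).choose (2 * k) * (2 * k).choose k = (n + k).choose k * n.choose k := by
    have := Nat.choose_mul (n := n + k) (k := 2 * k) (s := k) (by omega)
    rw [this]
    have e1 : n + k - k = n := by omega
    have e2 : 2 * k - k = k := by omega
    rw [e1, e2]
  have h2 : n.choose k * (n + k).choose k = (n + k).choose (2 * k) * Nat.centralBinom k := by
    rw [Nat.centralBinom, h1, mul_comm]
  rw [h2, Nat.mul_div_assoc _ (Nat.succ_dvd_centralBinom k), ← catalan_eq_centralBinom_div]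

lemma schroeder_eq_sch (n : ℕ) : schroeder n = sch n := by
  refine Finset.sum_congr rfl fun k hk => term_eq n k ?_
  simpa [Nat.lt_succ_iff] using Finset.mem_range.mp hk

lemma hs (m r : ℕ) : ∑ i ∈ range (m + 1), i.choose r = (m + 1).choose (r + 1) := by
  induction m with
  | zero => cases r <;> simp [Nat.choose]
  | succ m ih =>
    rw [Finset.sum_range_succ, ih, Nat.choose_succ_succ' (m + 1)]
    omega

lemma vd (m : ℕ) : ∀ r s : ℕ, ∑ i ∈ range (m + 1), i.choose r * (m - i).choose s
    = (m + 1).choose (r + s + 1) := by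
  induction m with
  | zero =>
    intro r s
    rcases r with _ | r <;> rcases s with _ | s <;> simp [Nat.choose]
  | succ m ih =>
    intro r s
    rcases s with _ | t
    · simpa using hs (m + 1) r
    · rw [Finset.sum_range_succ]
      have hz : (m + 1 - (m + 1)).choose (t + 1) = 0 := by simp
      rw [hz, mul_zero, add_zero]
      have hsplit : ∑ i ∈ range (m + 1), i.choose r * (m + 1 - i).choose (t + 1)
          = ∑ i ∈ range (m + 1), (i.choose r * (m - i).choose t
              + i.choose r * (m - i).choose (t + 1)) := by
        refine Finset.sum_congr rfl fun i hi => ?_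
        have hi' : i ≤ m := Nat.lt_succ_iff.mp (Finset.mem_range.mp hi)
        have : m + 1 - i = (m - i) + 1 := by omega
        rw [this, Nat.choose_succ_succ, Nat.mul_add]
      rw [hsplit, Finset.sum_add_distrib, ih r t, ih r (t + 1)]
      exact (Nat.choose_succ_succ' (m + 1) (r + t + 1)).symm

lemma vd' (n a b : ℕ) : ∑ j ∈ range (n + 1), (j + a).choose (2 * a) * (n - j + b).choose (2 * b)
    = (n + a + b + 1).choose (2 * a + 2 * b + 1) := by
  have step1 : ∑ j ∈ range (n + 1), (j + a).choose (2 * a) * (n - j + b).choose (2 * b)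
      = ∑ j ∈ range (n + 1), (a + j).choose (2 * a) * (n + a + b - (a + j)).choose (2 * b) := by
    refine Finset.sum_congr rfl fun j hj => ?_
    have hj' : j ≤ n := Nat.lt_succ_iff.mp (Finset.mem_range.mp hj)
    have e2 : n + a + b - (a + j) = n - j + b := by omega
    rw [e2, Nat.add_comm a j]
  have step2 := Finset.sum_Ico_eq_sum_range
    (f := fun i => i.choose (2 * a) * (n + a + b - i).choose (2 * b)) (m := a) (n := n + 1 + a)
  rw [show n + 1 + a - a = n + 1 from by omega] at step2
  have step3 : ∑ i ∈ Ico a (n + 1 + a), i.choose (2 * a) * (n + a + b - i).choose (2 * b)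
      = ∑ i ∈ range (n + a + b + 1), i.choose (2 * a) * (n + a + b - i).choose (2 * b) := by
    refine Finset.sum_subset ?_ ?_
    · intro x hx
      simp only [Finset.mem_Ico] at hx
      exact Finset.mem_range.mpr (by omega)
    · intro x hx hx'
      simp only [Finset.mem_range] at hx
      simp only [Finset.mem_Ico, not_and, not_lt] at hx'
      rcases lt_or_ge x a with h | h
      · rw [Nat.choose_eq_zero_of_lt (by omega), zero_mul]
      · have : n + 1 + a ≤ x := hx' h
        rw [Nat.choose_eq_zero_of_lt (k := 2 * b) (by omega), mul_zero]
  rw [step1, ← step2, step3, vd (n + a + b) (2 * a) (2 * b)]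

lemma catalan_succ_range (j : ℕ) :
    catalan (j + 1) = ∑ i ∈ range (j + 1), catalan i * catalan (j - i) := by
  rw [catalan_succ]
  exact Fin.sum_univ_eq_sum_range (fun i => catalan i * catalan (j - i)) (j + 1)

lemma tri (f : ℕ → ℕ → ℕ) : ∀ n, (∑ j ∈ range (n + 1), ∑ i ∈ range (j + 1), f i (j - i))
    = ∑ a ∈ range (n + 1), ∑ b ∈ range (n + 1 - a), f a b := by
  intro n
  induction n with
  | zero => simp
  | succ n ih =>
    rw [Finset.sum_range_succ, ih, Finset.sum_range_succ (fun a => ∑ b ∈ range (n + 2 - a), f a b)]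
    have h1 : ∑ a ∈ range (n + 1), ∑ b ∈ range (n + 2 - a), f a b
        = ∑ a ∈ range (n + 1), ((∑ b ∈ range (n + 1 - a), f a b) + f a (n + 1 - a)) := by
      refine Finset.sum_congr rfl fun a ha => ?_
      have ha' : a ≤ n := Nat.lt_succ_iff.mp (Finset.mem_range.mp ha)
      rw [show n + 2 - a = (n + 1 - a) + 1 from by omega, Finset.sum_range_succ]
    rw [h1, Finset.sum_add_distrib]
    have h2 : ∑ i ∈ range (n + 2), f i (n + 1 - i)
        = (∑ a ∈ range (n + 1), f a (n + 1 - a)) + f (n + 1) 0 := by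
      rw [Finset.sum_range_succ, Nat.sub_self]
    have h3 : ∑ b ∈ range (n + 2 - (n + 1)), f (n + 1) b = f (n + 1) 0 := by
      rw [show n + 2 - (n + 1) = 1 from by omega]
      simp
    rw [h2, h3]
    ring

lemma sch_ext (m N : ℕ) (h : m ≤ N) :
    sch m = ∑ a ∈ range (N + 1), (m + a).choose (2 * a) * catalan a := by
  rw [sch]
  refine Finset.sum_subset (by intro x hx; simp only [mem_range] at *; omega) ?_
  intro a ha ha'
  simp only [mem_range] at ha ha'
  rw [Nat.choose_eq_zero_of_lt (by omega), zero_mul]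

lemma sch_rec (n : ℕ) : sch (n + 1) = sch n + ∑ j ∈ range (n + 1), sch j * sch (n - j) := by
  have L1 : sch (n + 1) = (∑ j ∈ range (n + 1),
      ((n + 1 + j).choose (2 * j + 1) + (n + 1 + j).choose (2 * j + 2)) * catalan (j + 1)) + 1 := by
    rw [sch, Finset.sum_range_succ' (fun k => (n + 1 + k).choose (2 * k) * catalan k) (n + 1)]
    simp only [Nat.mul_zero, Nat.choose_zero_right, catalan_zero, mul_one]
    congr 1
  have L2 : sch n = (∑ j ∈ range (n + 1), (n + 1 + j).choose (2 * j + 2) * catalan (j + 1)) + 1 := by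
    have : sch n = ∑ k ∈ range (n + 2), (n + k).choose (2 * k) * catalan k := by
      rw [sch]
      refine Finset.sum_subset (by intro x hx; simp only [mem_range] at *; omega) ?_
      intro a ha ha'
      simp only [mem_range] at ha ha'
      rw [Nat.choose_eq_zero_of_lt (by omega), zero_mul]
    rw [this, Finset.sum_range_succ' (fun k => (n + k).choose (2 * k) * catalan k) (n + 1)]
    simp only [Nat.mul_zero, Nat.choose_zero_right, catalan_zero, mul_one]
    congr 1
    refine Finset.sum_congr rfl fun j hj => ?_
    rw [show n + (j + 1) = n + 1 + j from by omega, show 2 * (j + 1) = 2 * j + 2 from by omega]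
  have L3 : sch (n + 1) = sch n + ∑ j ∈ range (n + 1),
      (n + 1 + j).choose (2 * j + 1) * catalan (j + 1) := by
    rw [L1, L2]
    simp only [Nat.add_mul]
    rw [Finset.sum_add_distrib]
    ring
  set f : ℕ → ℕ → ℕ := fun a b => (n + a + b + 1).choose (2 * a + 2 * b + 1) * (catalan a * catalan b)
    with hf
  have L4 : ∑ j ∈ range (n + 1), (n + 1 + j).choose (2 * j + 1) * catalan (j + 1)
      = ∑ a ∈ range (n + 1), ∑ b ∈ range (n + 1 - a), f a b := by
    rw [← tri f n]
    refine Finset.sum_congr rfl fun j hj => ?_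
    rw [catalan_succ_range, Finset.mul_sum]
    refine Finset.sum_congr rfl fun i hi => ?_
    have hi' : i ≤ j := Nat.lt_succ_iff.mp (Finset.mem_range.mp hi)
    rw [hf]
    simp only []
    congr 2 <;> omega
  have L5 : ∑ a ∈ range (n + 1), ∑ b ∈ range (n + 1 - a), f a b
      = ∑ a ∈ range (n + 1), ∑ b ∈ range (n + 1), f a b := by
    refine Finset.sum_congr rfl fun a ha => ?_
    have ha' : a ≤ n := Nat.lt_succ_iff.mp (Finset.mem_range.mp ha)
    refine Finset.sum_subset (by intro x hx; simp only [mem_range] at *; omega) ?_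
    intro b hb hb'
    simp only [mem_range] at hb hb'
    rw [hf]
    simp only []
    rw [Nat.choose_eq_zero_of_lt (by omega), zero_mul]
  have R1 : ∑ j ∈ range (n + 1), sch j * sch (n - j)
      = ∑ a ∈ range (n + 1), ∑ b ∈ range (n + 1), f a b := by
    have hstep : ∀ j ∈ range (n + 1), sch j * sch (n - j)
        = ∑ a ∈ range (n + 1), ∑ b ∈ range (n + 1),
            ((j + a).choose (2 * a) * catalan a) * ((n - j + b).choose (2 * b) * catalan b) := by
      intro j hj
      have hj' : j ≤ n := Nat.lt_succ_iff.mp (Finset.mem_range.mp hj)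
      rw [sch_ext j n hj', sch_ext (n - j) n (by omega), Finset.sum_mul_sum]
    rw [Finset.sum_congr rfl hstep, Finset.sum_comm]
    refine Finset.sum_congr rfl fun a ha => ?_
    rw [Finset.sum_comm]
    refine Finset.sum_congr rfl fun b hb => ?_
    have : ∀ j ∈ range (n + 1),
        ((j + a).choose (2 * a) * catalan a) * ((n - j + b).choose (2 * b) * catalan b)
        = ((j + a).choose (2 * a) * (n - j + b).choose (2 * b)) * (catalan a * catalan b) := by
      intro j hj; ring
    rw [Finset.sum_congr rfl this, ← Finset.sum_mul, vd' n a b, hf]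
  rw [L3, L4, L5, R1]

lemma sch_zero : sch 0 = 1 := by
  simp [sch]

lemma sch_one : sch 1 = 2 := by
  rw [sch]
  rw [Finset.sum_range_succ, Finset.sum_range_succ, Finset.sum_range_zero]
  norm_num [catalan_one]

lemma g_prod (m : ℕ) :
    ∑ j ∈ Ico 1 m, (((2 + 4 * (j / 2) : ℕ)) : ZMod 16) * ((2 + 4 * ((m - j) / 2) : ℕ) : ZMod 16)
      = 4 * ((m - 1 : ℕ) : ZMod 16) := by
  have h16 : (16 : ZMod 16) = 0 := by decide
  have key : ∀ j ∈ Ico 1 m,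
      (((2 + 4 * (j / 2) : ℕ)) : ZMod 16) * ((2 + 4 * ((m - j) / 2) : ℕ) : ZMod 16)
      = 4 + 8 * ((j / 2 : ℕ) : ZMod 16) + 8 * (((m - j) / 2 : ℕ) : ZMod 16) := by
    intro j hj
    push_cast
    linear_combination (((j / 2 : ℕ)) : ZMod 16) * (((m - j) / 2 : ℕ) : ZMod 16) * h16
  rw [Finset.sum_congr rfl key, Finset.sum_add_distrib, Finset.sum_add_distrib,
    ← Finset.mul_sum, ← Finset.mul_sum, Finset.sum_const, Nat.card_Ico]
  have hrefl : ∑ j ∈ Ico 1 m, (((m - j) / 2 : ℕ) : ZMod 16)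
      = ∑ j ∈ Ico 1 m, ((j / 2 : ℕ) : ZMod 16) := by
    refine Finset.sum_nbij' (fun j => m - j) (fun j => m - j) ?_ ?_ ?_ ?_ ?_
    · intro a ha; simp only [mem_Ico] at *; omega
    · intro a ha; simp only [mem_Ico] at *; omega
    · intro a ha; simp only [mem_Ico] at ha; omega
    · intro a ha; simp only [mem_Ico] at ha; omega
    · intro a ha; rfl
  rw [hrefl, nsmul_eq_mul]
  linear_combination (∑ j ∈ Ico 1 m, ((j / 2 : ℕ) : ZMod 16)) * h16

lemma sch_mod : ∀ n, 1 ≤ n → ((sch n : ℕ) : ZMod 16) = ((2 + 4 * (n / 2) : ℕ) : ZMod 16) := by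
  intro n
  induction n using Nat.strong_induction_on with
  | _ n ih =>
    intro hn
    match n, hn with
    | 1, _ => norm_num [sch_one]
    | (m + 2), _ =>
      have h16 : (16 : ZMod 16) = 0 := by decide
      set M := m + 1 with hM
      have hM1 : 1 ≤ M := by omega
      rw [show m + 2 = M + 1 from rfl, sch_rec M]
      push_cast
      rw [Finset.sum_range_succ, Finset.range_eq_Ico,
        ← Finset.sum_Ico_consecutive (fun j => ((sch j : ℕ) : ZMod 16) * ((sch (M - j) : ℕ) : ZMod 16))
          (Nat.zero_le 1) (by omega : 1 ≤ M)]
      have h0 : ∑ j ∈ Ico 0 1, ((sch j : ℕ) : ZMod 16) * ((sch (M - j) : ℕ) : ZMod 16)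
          = ((sch M : ℕ) : ZMod 16) := by
        rw [show Ico 0 1 = {0} from rfl, Finset.sum_singleton, sch_zero, Nat.sub_zero]
        norm_num
      have hmid : ∑ j ∈ Ico 1 M, ((sch j : ℕ) : ZMod 16) * ((sch (M - j) : ℕ) : ZMod 16)
          = 4 * ((M - 1 : ℕ) : ZMod 16) := by
        rw [← g_prod M]
        refine Finset.sum_congr rfl fun j hj => ?_
        simp only [mem_Ico] at hj
        rw [ih j (by omega) (by omega), ih (M - j) (by omega) (by omega)]
      rw [h0, hmid, Nat.sub_self, sch_zero, ih M (by omega) hM1]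
      push_cast
      rcases Nat.even_or_odd M with ⟨a, ha⟩ | ⟨a, ha⟩
      · have ha1 : 1 ≤ a := by omega
        rw [show M / 2 = a from by omega, show (M + 1) / 2 = a from by omega,
          show M - 1 = a + a - 1 from by omega]
        push_cast [Nat.cast_sub (by omega : 1 ≤ a + a)]
        linear_combination (a : ZMod 16) * h16
      · rw [show M / 2 = a from by omega, show (M + 1) / 2 = a + 1 from by omega,
          show M - 1 = 2 * a from by omega]
        push_cast
        linear_combination (a : ZMod 16) * h16

theorem schroeder_add_two (n : ℕ) (hn : 1 ≤ n) :
    schroeder (n + 2) ≡ schroeder n + 4 [MOD 16] := by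
  have h1 := sch_mod (n + 2) (by omega)
  have h2 := sch_mod n hn
  refine (ZMod.natCast_eq_natCast_iff _ _ _).mp ?_
  rw [schroeder_eq_sch, schroeder_eq_sch] at *
  push_cast
  rw [h1, h2, show (n + 2) / 2 = n / 2 + 1 from by omega]
  push_cast
  ring
end

section
/- For all integers n ≥ 1 and α ≥ 1, s_{n+2^α} ≡ s_n + 2^α (mod 2^{α+1}), where s_n = S_n/2 is the little Schröder number. -/
/-- The little Schröder number `s n = S n / 2` (for `n ≥ 1` the number `S n` is even). -/
def littleSchroeder (n : ℕ) : ℕ := schroeder n / 2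

open Finset

namespace SchroederStern

def G (x : ℤ) (n : ℕ) : ℤ :=
  ∑ k ∈ range (n + 1), x ^ k * (catalan k : ℤ) * ((n + k).choose (2 * k) : ℤ)

lemma choose_add_eq_zero {n k : ℕ} (h : n < k) : (n + k).choose (2 * k) = 0 :=
  Nat.choose_eq_zero_of_lt (by omega)

lemma G_ext (x : ℤ) (n N : ℕ) (h : n + 1 ≤ N) :
    G x n = ∑ k ∈ range N, x ^ k * (catalan k : ℤ) * ((n + k).choose (2 * k) : ℤ) := by
  refine Finset.sum_subset (by intro a ha; simp only [mem_range] at *; omega) ?_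
  intro k _ hk
  simp only [mem_range, not_lt] at hk
  rw [choose_add_eq_zero (by omega)]
  simp

lemma sum_choose_mul_choose (m : ℕ) : ∀ p q : ℕ,
    ∑ i ∈ range (m + 1), (i.choose p) * ((m - i).choose q) = (m + 1).choose (p + q + 1) := by
  induction m with
  | zero =>
    rintro (_ | p) (_ | q)
    · simp
    · simp [Nat.choose_eq_zero_of_lt (show 1 < q + 1 + 1 by omega)]
    · simp [Nat.choose_eq_zero_of_lt (show 1 < p + 1 + 0 + 1 by omega)]
    · simp [Nat.choose_eq_zero_of_lt (show 1 < p + 1 + (q + 1) + 1 by omega)]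
  | succ m ih =>
    intro p q
    rcases Nat.eq_zero_or_pos q with hq | hq
    · subst hq
      rw [Finset.sum_range_succ]
      simp only [Nat.choose_zero_right, Nat.mul_one, Nat.add_zero]
      have h0 := ih p 0
      simp only [Nat.choose_zero_right, Nat.mul_one, Nat.add_zero] at h0
      rw [h0, Nat.choose_succ_succ (m + 1) p, Nat.add_comm]
    · obtain ⟨q', rfl⟩ : ∃ q', q = q' + 1 := ⟨q - 1, by omega⟩
      rw [Finset.sum_range_succ]
      have hlast : (m + 1).choose p * ((m + 1 - (m + 1)).choose (q' + 1)) = 0 := by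
        simp
      rw [hlast, Nat.add_zero]
      have hsplit : ∑ i ∈ range (m + 1), i.choose p * ((m + 1 - i).choose (q' + 1)) =
          ∑ i ∈ range (m + 1), (i.choose p * ((m - i).choose q') +
            i.choose p * ((m - i).choose (q' + 1))) := by
        refine Finset.sum_congr rfl fun i hi => ?_
        simp only [mem_range] at hi
        have h1 : m + 1 - i = (m - i) + 1 := by omega
        rw [h1, Nat.choose_succ_succ, Nat.mul_add]
      rw [hsplit, Finset.sum_add_distrib, ih p q', ih p (q' + 1)]
      rw [show p + (q' + 1) + 1 = (p + q' + 1) + 1 by ring, Nat.choose_succ_succ (m + 1)]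

lemma sum_choose_shift (n a b : ℕ) :
    ∑ j ∈ range (n + 1), ((j + a).choose (2 * a)) * ((n - j + b).choose (2 * b)) =
      (n + a + b + 1).choose (2 * a + 2 * b + 1) := by
  have key := sum_choose_mul_choose (n + a + b) (2 * a) (2 * b)
  rw [← key]
  have h1 : ∑ i ∈ range (n + a + b + 1), (i.choose (2 * a)) * ((n + a + b - i).choose (2 * b)) =
      ∑ i ∈ Ico a (n + a + 1), (i.choose (2 * a)) * ((n + a + b - i).choose (2 * b)) := by
    refine (Finset.sum_subset ?_ ?_).symm
    · intro x hx; simp only [mem_Ico, mem_range] at *; omega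
    · intro i hi hni
      simp only [mem_Ico, mem_range, not_and, not_le, not_lt] at hi hni
      rcases Nat.lt_or_ge i a with h | h
      · rw [Nat.choose_eq_zero_of_lt (by omega), Nat.zero_mul]
      · have : n + a + b - i < 2 * b := by omega
        rw [Nat.choose_eq_zero_of_lt this, Nat.mul_zero]
  rw [h1, Finset.sum_Ico_eq_sum_range]
  have h2 : n + a + 1 - a = n + 1 := by omega
  rw [h2]
  refine Finset.sum_congr rfl fun j hj => ?_
  simp only [mem_range] at hj
  have h3 : n + a + b - (a + j) = n - j + b := by omega
  rw [h3, Nat.add_comm a j]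

lemma catalan_succ_range (m : ℕ) :
    catalan (m + 1) = ∑ k ∈ range (m + 1), catalan k * catalan (m - k) := by
  rw [catalan_succ', Nat.sum_antidiagonal_eq_sum_range_succ (fun x y => catalan x * catalan y)]

lemma conv (x : ℤ) (n : ℕ) :
    ∑ j ∈ range (n + 1), G x j * G x (n - j)
      = ∑ m ∈ range (n + 1),
          x ^ m * (catalan (m + 1) : ℤ) * ((n + m + 1).choose (2 * m + 1) : ℤ) := by
  have stepA : ∑ j ∈ range (n + 1), G x j * G x (n - j) =
      ∑ j ∈ range (n + 1), ∑ a ∈ range (n + 1), ∑ b ∈ range (n + 1),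
        (x ^ a * (catalan a : ℤ) * ((j + a).choose (2 * a) : ℤ)) *
          (x ^ b * (catalan b : ℤ) * ((n - j + b).choose (2 * b) : ℤ)) := by
    refine Finset.sum_congr rfl fun j hj => ?_
    simp only [mem_range] at hj
    rw [G_ext x j (n + 1) (by omega), G_ext x (n - j) (n + 1) (by omega), Finset.sum_mul_sum]
  rw [stepA, Finset.sum_comm]
  have stepB : ∀ a ∈ range (n + 1),
      (∑ j ∈ range (n + 1), ∑ b ∈ range (n + 1),
        (x ^ a * (catalan a : ℤ) * ((j + a).choose (2 * a) : ℤ)) *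
          (x ^ b * (catalan b : ℤ) * ((n - j + b).choose (2 * b) : ℤ)))
      = ∑ b ∈ range (n + 1),
          x ^ (a + b) * (catalan a : ℤ) * (catalan b : ℤ) *
            ((n + a + b + 1).choose (2 * a + 2 * b + 1) : ℤ) := by
    intro a _
    rw [Finset.sum_comm]
    refine Finset.sum_congr rfl fun b _ => ?_
    have h1 : ∀ j ∈ range (n + 1),
        (x ^ a * (catalan a : ℤ) * ((j + a).choose (2 * a) : ℤ)) *
          (x ^ b * (catalan b : ℤ) * ((n - j + b).choose (2 * b) : ℤ))
        = (x ^ (a + b) * (catalan a : ℤ) * (catalan b : ℤ)) *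
            (((j + a).choose (2 * a) * ((n - j + b).choose (2 * b)) : ℕ) : ℤ) := by
      intro j _
      push_cast
      rw [pow_add]
      ring
    rw [Finset.sum_congr rfl h1, ← Finset.mul_sum, ← Nat.cast_sum, sum_choose_shift]
  rw [Finset.sum_congr rfl stepB]
  have stepC : ∀ a ∈ range (n + 1),
      (∑ b ∈ range (n + 1),
          x ^ (a + b) * (catalan a : ℤ) * (catalan b : ℤ) *
            ((n + a + b + 1).choose (2 * a + 2 * b + 1) : ℤ))
      = ∑ b ∈ range (n + 1 - a),
          x ^ (a + b) * (catalan a : ℤ) * (catalan b : ℤ) *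
            ((n + a + b + 1).choose (2 * a + 2 * b + 1) : ℤ) := by
    intro a ha
    simp only [mem_range] at ha
    refine (Finset.sum_subset (by intro t ht; simp only [mem_range] at *; omega) ?_).symm
    intro b hb hnb
    simp only [mem_range, not_lt] at hb hnb
    rw [Nat.choose_eq_zero_of_lt (by omega)]
    simp
  rw [Finset.sum_congr rfl stepC, ← Finset.sum_range_diag_flip (n + 1)
    (fun a b => x ^ (a + b) * (catalan a : ℤ) * (catalan b : ℤ) *
      ((n + a + b + 1).choose (2 * a + 2 * b + 1) : ℤ))]
  refine Finset.sum_congr rfl fun m hm => ?_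
  simp only [mem_range] at hm
  have h2 : ∀ k ∈ range (m + 1),
      x ^ (k + (m - k)) * (catalan k : ℤ) * (catalan (m - k) : ℤ) *
        ((n + k + (m - k) + 1).choose (2 * k + 2 * (m - k) + 1) : ℤ)
      = (x ^ m * ((n + m + 1).choose (2 * m + 1) : ℤ)) *
          ((catalan k * catalan (m - k) : ℕ) : ℤ) := by
    intro k hk
    simp only [mem_range] at hk
    have e1 : k + (m - k) = m := by omega
    have e2 : n + k + (m - k) + 1 = n + m + 1 := by omega
    have e3 : 2 * k + 2 * (m - k) + 1 = 2 * m + 1 := by omega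
    rw [e1, e2, e3]
    push_cast
    ring
  rw [Finset.sum_congr rfl h2, ← Finset.mul_sum, ← Nat.cast_sum, ← catalan_succ_range]
  ring

end SchroederStern

namespace SchroederStern

lemma G_rec (x : ℤ) (n : ℕ) :
    G x (n + 1) = G x n + x * ∑ j ∈ range (n + 1), G x j * G x (n - j) := by
  rw [conv, Finset.mul_sum]
  have hA : G x (n + 1) =
      (∑ k ∈ range (n + 1), x ^ (k + 1) * (catalan (k + 1) : ℤ) *
        (((n + 1) + (k + 1)).choose (2 * (k + 1)) : ℤ)) + 1 := by
    rw [G, Finset.sum_range_succ']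
    norm_num
  have hB : G x n =
      (∑ k ∈ range (n + 1), x ^ (k + 1) * (catalan (k + 1) : ℤ) *
        ((n + (k + 1)).choose (2 * (k + 1)) : ℤ)) + 1 := by
    rw [G_ext x n (n + 2) (by omega), Finset.sum_range_succ']
    norm_num
  rw [hA, hB]
  have key : ∀ k ∈ range (n + 1),
      x ^ (k + 1) * (catalan (k + 1) : ℤ) * (((n + 1) + (k + 1)).choose (2 * (k + 1)) : ℤ)
      = x ^ (k + 1) * (catalan (k + 1) : ℤ) * ((n + (k + 1)).choose (2 * (k + 1)) : ℤ)
        + x * (x ^ k * (catalan (k + 1) : ℤ) * ((n + k + 1).choose (2 * k + 1) : ℤ)) := by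
    intro k _
    have e1 : (n + 1) + (k + 1) = (n + k + 1) + 1 := by omega
    have e2 : 2 * (k + 1) = (2 * k + 1) + 1 := by omega
    have e3 : n + (k + 1) = n + k + 1 := by omega
    rw [e1, e2, e3, Nat.choose_succ_succ]
    push_cast
    ring
  rw [Finset.sum_congr rfl key, Finset.sum_add_distrib]
  ring

lemma G_zero (x : ℤ) : G x 0 = 1 := by
  simp [G]

lemma G_one (x : ℤ) : G x 1 = 1 + x := by
  rw [show (1 : ℕ) = 0 + 1 by rfl, G_rec]
  simp [G_zero]

lemma G1_eq_GA : ∀ n : ℕ, 1 ≤ n → G 1 n = 2 * (-1) ^ n * G (-2) n := by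
  intro n
  induction n using Nat.strong_induction_on with
  | _ n ih =>
    intro hn
    match n, hn with
    | 1, _ => simp [G_one]
    | (m + 2), _ =>
      have hm : 1 ≤ m + 1 := by omega
      -- recurrences at m+1
      have r1 := G_rec 1 (m + 1)
      have rA := G_rec (-2) (m + 1)
      -- split the convolution sums: range (m+2) = {0} ∪ [1, m] ∪ {m+1}
      have split : ∀ y : ℤ, ∑ j ∈ range (m + 2), G y j * G y (m + 1 - j)
          = (∑ j ∈ range m, G y (j + 1) * G y (m - j)) + G y (m + 1) + G y (m + 1) := by
        intro y
        rw [Finset.sum_range_succ, Finset.sum_range_succ']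
        have h1 : G y (m + 1) * G y (m + 1 - (m + 1)) = G y (m + 1) := by
          simp [G_zero]
        have h2 : G y 0 * G y (m + 1 - 0) = G y (m + 1) := by
          simp [G_zero]
        have h3 : ∀ j ∈ range m, G y (j + 1) * G y (m + 1 - (j + 1)) = G y (j + 1) * G y (m - j) := by
          intro j _
          congr 2
          omega
        rw [Finset.sum_congr rfl h3, h1, h2]
      have splitmid : ∀ j ∈ range m, G 1 (j + 1) * G 1 (m - j)
          = 4 * (-1) ^ (m + 1) * (G (-2) (j + 1) * G (-2) (m - j)) := by
        intro j hj
        simp only [mem_range] at hj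
        rw [ih (j + 1) (by omega) (by omega), ih (m - j) (by omega) (by omega)]
        have : (-1 : ℤ) ^ (j + 1) * (-1) ^ (m - j) = (-1) ^ (m + 1) := by
          rw [← pow_add]
          congr 1
          omega
        calc 2 * (-1) ^ (j + 1) * G (-2) (j + 1) * (2 * (-1) ^ (m - j) * G (-2) (m - j))
            = 4 * ((-1 : ℤ) ^ (j + 1) * (-1) ^ (m - j)) * (G (-2) (j + 1) * G (-2) (m - j)) := by
              ring
          _ = _ := by rw [this]
      have hGm := ih (m + 1) (by omega) hm
      -- compute
      rw [split 1, Finset.sum_congr rfl splitmid, ← Finset.mul_sum] at r1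
      rw [split (-2)] at rA
      -- let SA := ∑ j ∈ range m, G (-2) (j+1) * G (-2) (m - j)
      set SA := ∑ j ∈ range m, G (-2) (j + 1) * G (-2) (m - j) with hSA
      set gm := G (-2) (m + 1) with hgm
      rw [r1, rA, hGm]
      have hsign : (-1 : ℤ) ^ (m + 2) = (-1) ^ m := by
        rw [pow_add]; norm_num
      have hsign1 : (-1 : ℤ) ^ (m + 1) = -(-1) ^ m := by
        rw [pow_add]; norm_num
      rw [hsign, hsign1]
      ring
end SchroederStern
open Finset

namespace SchroederStern

lemma two_pow_dvd_choose {a t i : ℕ} (hi : 0 < i) (hit : i < 2 ^ t) :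
    2 ^ (a + 1 - t) ∣ (2 ^ a).choose i := by
  rcases Nat.lt_or_ge a t with hat | hat
  · have : a + 1 - t = 0 := by omega
    rw [this]
    exact one_dvd _
  have h2a : 0 < 2 ^ a := pow_pos (by norm_num : (0:ℕ) < 2) a
  have key : 2 ^ a ∣ i * (2 ^ a).choose i := by
    have h := Nat.add_one_mul_choose_eq (2 ^ a - 1) (i - 1)
    have e1 : 2 ^ a - 1 + 1 = 2 ^ a := by omega
    have e2 : i - 1 + 1 = i := by omega
    rw [e1, e2] at h
    exact ⟨(2 ^ a - 1).choose (i - 1), by rw [Nat.mul_comm]; exact h.symm⟩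
  set v := (i.factorization) 2 with hv
  obtain ⟨u, hu⟩ : 2 ^ v ∣ i := Nat.ordProj_dvd i 2
  have hu_odd : ¬ 2 ∣ u := by
    have h1 := Nat.not_dvd_ordCompl Nat.prime_two hi.ne'
    have h2 : i / 2 ^ v = u := by
      rw [hu, Nat.mul_div_cancel_left _ (pow_pos (by norm_num : (0:ℕ) < 2) v)]
    rwa [← hv, h2] at h1
  have hvt : v < t := by
    have h1 : 2 ^ v ≤ i := Nat.le_of_dvd hi ⟨u, hu⟩
    have h2 : 2 ^ v < 2 ^ t := lt_of_le_of_lt h1 hit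
    exact (Nat.pow_lt_pow_iff_right (by norm_num)).mp h2
  have key2 : 2 ^ (a - v) ∣ u * ((2 ^ a).choose i) := by
    have hsplit : 2 ^ v * 2 ^ (a - v) = 2 ^ a := by
      rw [← pow_add]; congr 1; omega
    have h3 : 2 ^ v * 2 ^ (a - v) ∣ 2 ^ v * (u * (2 ^ a).choose i) := by
      rw [hsplit]
      have : 2 ^ v * (u * (2 ^ a).choose i) = i * (2 ^ a).choose i := by
        rw [hu]; ring
      rwa [this]
    exact (mul_dvd_mul_iff_left (pow_ne_zero v (two_ne_zero))).mp h3
  have hcop : Nat.Coprime (2 ^ (a - v)) u :=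
    Nat.Coprime.pow_left _ ((Nat.Prime.coprime_iff_not_dvd Nat.prime_two).mpr hu_odd)
  have hdvd : 2 ^ (a - v) ∣ (2 ^ a).choose i := hcop.dvd_of_dvd_mul_left key2
  exact dvd_trans (pow_dvd_pow 2 (by omega)) hdvd

lemma choose_add_two_pow_modEq (m j a t : ℕ) (hj : 0 < j) (hjt : j < 2 ^ t) :
    (m + 2 ^ a).choose j ≡ m.choose j [MOD 2 ^ (a + 1 - t)] := by
  rw [Nat.add_choose_eq]
  have hmem : ((j, 0) : ℕ × ℕ) ∈ Finset.HasAntidiagonal.antidiagonal j := by simp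
  rw [← Finset.sum_erase_add _ _ hmem]
  have hj0 : m.choose j * (2 ^ a).choose 0 = m.choose j := by simp
  rw [hj0]
  have hdvd : 2 ^ (a + 1 - t) ∣
      ∑ ij ∈ (Finset.HasAntidiagonal.antidiagonal j).erase (j, 0), m.choose ij.1 * (2 ^ a).choose ij.2 := by
    refine Finset.dvd_sum fun ij hij => ?_
    have h1 : ij ∈ Finset.HasAntidiagonal.antidiagonal j := Finset.mem_of_mem_erase hij
    have h2 : ij ≠ (j, 0) := Finset.ne_of_mem_erase hij
    rw [Finset.HasAntidiagonal.mem_antidiagonal] at h1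
    have h3 : 0 < ij.2 := by
      rcases Nat.eq_zero_or_pos ij.2 with h | h
      · exfalso
        apply h2
        have h4 : ij.1 = j := by omega
        exact Prod.ext h4 h
      · exact h
    exact Dvd.dvd.mul_left (two_pow_dvd_choose h3 (by omega)) _
  have h0 := (Nat.modEq_zero_iff_dvd).mpr hdvd
  simpa using h0.add_right (m.choose j)

lemma choose_two_add (m a : ℕ) :
    (m + 2 ^ a).choose 2 = m.choose 2 + m * 2 ^ a + (2 ^ a).choose 2 := by
  rw [Nat.add_choose_eq, Finset.Nat.sum_antidiagonal_eq_sum_range_succ_mk]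
  rw [Finset.sum_range_succ, Finset.sum_range_succ, Finset.sum_range_succ,
    Finset.sum_range_zero]
  simp [Nat.choose_one_right]
  ring

lemma lt_two_pow_pred {k : ℕ} (hk : 3 ≤ k) : k < 2 ^ (k - 1) := by
  induction k with
  | zero => omega
  | succ k ih =>
    rcases Nat.lt_or_ge k 3 with h | h
    · interval_cases k <;> simp_all
    · have h1 := ih (by omega)
      have h2 : 2 ^ (k - 1) * 2 = 2 ^ (k + 1 - 1) := by
        rw [← pow_succ]; congr 1; omega
      omega

lemma log_add_two_le {k : ℕ} (hk : 3 ≤ k) : Nat.log 2 k + 2 ≤ k := by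
  have h1 : Nat.log 2 k < k - 1 :=
    Nat.log_lt_of_lt_pow (by omega) (lt_two_pow_pred hk)
  omega

end SchroederStern
open Finset

namespace SchroederStern

lemma term_eq (n k : ℕ) (hk : k ≤ n) :
    n.choose k * (n + k).choose k / (k + 1) = (n + k).choose (2 * k) * catalan k := by
  have h1 : (n + k).choose (2 * k) * ((2 * k).choose k) = (n + k).choose k * n.choose k := by
    have := Nat.choose_mul (n := n + k) (k := 2 * k) (s := k) (by omega)
    simpa [two_mul, Nat.add_sub_cancel] using this
  have h2 : n.choose k * (n + k).choose k = ((n + k).choose (2 * k) * catalan k) * (k + 1) := by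
    calc n.choose k * (n + k).choose k = (n + k).choose (2 * k) * ((2 * k).choose k) := by
            rw [h1]; ring
      _ = (n + k).choose (2 * k) * ((k + 1) * catalan k) := by
            rw [succ_mul_catalan_eq_centralBinom, Nat.centralBinom_eq_two_mul_choose]
      _ = _ := by ring
  rw [h2, Nat.mul_div_cancel _ (Nat.succ_pos k)]

lemma schroeder_cast (n : ℕ) : (schroeder n : ℤ) = G 1 n := by
  have h1 : schroeder n = ∑ k ∈ range (n + 1), (n + k).choose (2 * k) * catalan k := by
    rw [schroeder]
    refine Finset.sum_congr rfl fun k hk => ?_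
    simp only [mem_range] at hk
    exact term_eq n k (by omega)
  rw [h1, G]
  push_cast
  refine Finset.sum_congr rfl fun k _ => ?_
  ring

lemma littleSchroeder_cast (n : ℕ) (hn : 1 ≤ n) :
    (littleSchroeder n : ℤ) = (-1) ^ n * G (-2) n := by
  have h1 : (schroeder n : ℤ) = 2 * ((-1) ^ n * G (-2) n) := by
    rw [schroeder_cast, G1_eq_GA n hn]; ring
  have h2 : (0 : ℤ) ≤ (-1) ^ n * G (-2) n := by
    have h3 : (0 : ℤ) ≤ (schroeder n : ℤ) := Int.natCast_nonneg _
    linarith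
  obtain ⟨m, hm⟩ := Int.eq_ofNat_of_zero_le h2
  rw [hm] at h1
  have h3 : schroeder n = 2 * m := by exact_mod_cast h1
  rw [littleSchroeder, h3, Nat.mul_div_cancel_left m (by norm_num), hm]

lemma key_dvd (n α : ℕ) (hn : 1 ≤ n) (hα : 1 ≤ α) :
    ((2 : ℤ) ^ (α + 1)) ∣ (G (-2) (n + 2 ^ α) - G (-2) n) - 2 ^ α := by
  have h2p : 1 ≤ 2 ^ α := Nat.one_le_two_pow
  set N := n + 2 ^ α with hN
  rw [G_ext (-2) n (N + 1) (by omega)]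
  rw [show G (-2) N = ∑ k ∈ range (N + 1),
      (-2 : ℤ) ^ k * (catalan k : ℤ) * ((N + k).choose (2 * k) : ℤ) from rfl]
  rw [← Finset.sum_sub_distrib]
  have hone : (1 : ℕ) ∈ range (N + 1) := by
    simp only [mem_range]; omega
  have hgsum : ∑ k ∈ range (N + 1), (if k = 1 then ((2 : ℤ)) ^ α else 0) = 2 ^ α := by
    rw [Finset.sum_ite_eq' (range (N + 1)) 1 (fun _ => ((2 : ℤ)) ^ α), if_pos hone]
  rw [← hgsum, ← Finset.sum_sub_distrib]
  refine Finset.dvd_sum ?_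
  intro k hk
  rcases k with _ | _ | k
  · -- k = 0
    norm_num
  · -- k = 1
    obtain ⟨β, rfl⟩ : ∃ β, α = β + 1 := ⟨α - 1, by omega⟩
    have he : N + 1 = (n + 1) + 2 ^ (β + 1) := by omega
    have hc := choose_two_add (n + 1) (β + 1)
    have hcZ : ((N + 1).choose 2 : ℤ) =
        ((n + 1).choose 2 : ℤ) + (n + 1) * 2 ^ (β + 1) + ((2 ^ (β + 1)).choose 2 : ℤ) := by
      rw [he, hc]; push_cast; ring
    have htwo : (2 ^ (β + 1)).choose 2 * 2 = 2 ^ (β + 1) * (2 ^ (β + 1) - 1) := by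
      rw [Nat.choose_two_right, Nat.div_mul_cancel]
      exact Dvd.dvd.mul_right (dvd_pow_self 2 (by omega)) _
    have htwoZ : (((2 ^ (β + 1)).choose 2 : ℕ) : ℤ) * 2 = 2 ^ (β + 1) * (2 ^ (β + 1) - 1) := by
      have hcast := congrArg (Nat.cast : ℕ → ℤ) htwo
      push_cast [Nat.cast_sub (Nat.one_le_two_pow (n := β + 1))] at hcast
      linarith
    refine ⟨-(n + 1) - 2 ^ β, ?_⟩
    norm_num [catalan_one]
    linear_combination (-2 : ℤ) * hcZ - htwoZ
  · -- k ≥ 2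
    rw [show k + 1 + 1 = k + 2 from rfl]
    simp only [mem_range] at hk
    have hne : ¬ (k + 2 = 1) := by omega
    rw [if_neg hne, sub_zero]
    rcases Nat.lt_or_ge α (k + 2) with hcase | hcase
    · -- α + 1 ≤ k + 2 : trivial from the power of 2
      have h2 : ((2 : ℤ)) ^ (α + 1) ∣ (-2 : ℤ) ^ (k + 2) := by
        have he : (-2 : ℤ) ^ (k + 2) = (-1) ^ (k + 2) * (2 ^ (α + 1) * 2 ^ (k + 2 - (α + 1))) := by
          rw [← pow_add, show α + 1 + (k + 2 - (α + 1)) = k + 2 by omega]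
          rw [show (-2 : ℤ) = -1 * 2 by norm_num, mul_pow]
        exact ⟨(-1) ^ (k + 2) * 2 ^ (k + 2 - (α + 1)), by rw [he]; ring⟩
      have hf : (-2 : ℤ) ^ (k + 2) * (catalan (k + 2) : ℤ) * ((N + (k + 2)).choose (2 * (k + 2)) : ℤ)
          - (-2 : ℤ) ^ (k + 2) * (catalan (k + 2) : ℤ) * ((n + (k + 2)).choose (2 * (k + 2)) : ℤ)
          = (-2 : ℤ) ^ (k + 2) * ((catalan (k + 2) : ℤ) * ((N + (k + 2)).choose (2 * (k + 2)) : ℤ)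
            - (catalan (k + 2) : ℤ) * ((n + (k + 2)).choose (2 * (k + 2)) : ℤ)) := by ring
      rw [hf]
      exact Dvd.dvd.mul_right h2 _
    · -- k + 2 ≤ α
      rcases Nat.eq_zero_or_pos k with rfl | hkpos
      · -- term k = 2 : use catalan 2 = 2 and period modulus 2^(α-2)
        obtain ⟨γ, rfl⟩ : ∃ γ, α = γ + 2 := ⟨α - 2, by omega⟩
        have hmod := choose_add_two_pow_modEq (n + 2) 4 (γ + 2) 3 (by norm_num) (by norm_num)
        have hdvd : ((2 : ℤ) ^ (γ + 2 + 1 - 3)) ∣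
            ((((n + 2) + 2 ^ (γ + 2)).choose 4 : ℤ) - ((n + 2).choose 4 : ℤ)) := by
          have h5 := (Nat.modEq_iff_dvd).mp hmod.symm
          exact_mod_cast h5
        obtain ⟨c, hc⟩ := hdvd
        have he2 : N + 2 = (n + 2) + 2 ^ (γ + 2) := by omega
        have he3 : 2 * 2 = 4 := by norm_num
        rw [he2, he3, catalan_two]
        refine ⟨c, ?_⟩
        have hγ : (2 : ℤ) ^ (γ + 2 + 1 - 3) = 2 ^ γ := by
          rw [show γ + 2 + 1 - 3 = γ by omega]
        rw [hγ] at hc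
        have hexp : (2 : ℤ) ^ (γ + 2 + 1) = 8 * 2 ^ γ := by
          rw [show γ + 2 + 1 = γ + 3 by omega, pow_add]; ring
        rw [hexp]
        push_cast
        linear_combination (8 : ℤ) * hc
      · -- 3 ≤ k + 2 ≤ α
        set K := k + 2 with hK
        have hK3 : 3 ≤ K := by omega
        set t := Nat.log 2 K + 2 with ht
        have htK : t ≤ K := log_add_two_le hK3
        have h2K : 2 * K < 2 ^ t := by
          have h1 : K < 2 ^ (Nat.log 2 K + 1) := Nat.lt_pow_succ_log_self (by norm_num) K
          have h2 : 2 ^ t = 2 * 2 ^ (Nat.log 2 K + 1) := by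
            rw [ht, pow_succ]; ring
          omega
        have hmod := choose_add_two_pow_modEq (n + K) (2 * K) α t (by omega) h2K
        have hdvd : ((2 : ℤ) ^ (α + 1 - t)) ∣
            (((N + K).choose (2 * K) : ℤ) - ((n + K).choose (2 * K) : ℤ)) := by
          have h5 := (Nat.modEq_iff_dvd).mp hmod.symm
          have he : N + K = (n + K) + 2 ^ α := by omega
          rw [he]
          exact_mod_cast h5
        obtain ⟨c, hc⟩ := hdvd
        have hf : (-2 : ℤ) ^ K * (catalan K : ℤ) * ((N + K).choose (2 * K) : ℤ)
            - (-2 : ℤ) ^ K * (catalan K : ℤ) * ((n + K).choose (2 * K) : ℤ)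
            = ((-1) ^ K * (catalan K : ℤ)) * (2 ^ K * (((N + K).choose (2 * K) : ℤ)
              - ((n + K).choose (2 * K) : ℤ))) := by
          rw [show (-2 : ℤ) = -1 * 2 by norm_num, mul_pow]
          ring
        rw [hf]
        refine Dvd.dvd.mul_left ?_ _
        have hexp2 : (2 : ℤ) ^ K * (2 : ℤ) ^ (α + 1 - t) =
            2 ^ (α + 1) * 2 ^ (K + (α + 1 - t) - (α + 1)) := by
          rw [← pow_add, ← pow_add]
          congr 1
          omega
        refine ⟨2 ^ (K + (α + 1 - t) - (α + 1)) * c, ?_⟩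
        rw [hc, ← mul_assoc, hexp2, mul_assoc]

end SchroederStern

theorem littleSchroeder_stern (n α : ℕ) (hn : 1 ≤ n) (hα : 1 ≤ α) :
    littleSchroeder (n + 2 ^ α) ≡ littleSchroeder n + 2 ^ α [MOD 2 ^ (α + 1)] := by
  have h2p : 1 ≤ 2 ^ α := Nat.one_le_two_pow
  rw [Nat.modEq_iff_dvd]
  push_cast
  rw [SchroederStern.littleSchroeder_cast (n + 2 ^ α) (by omega),
    SchroederStern.littleSchroeder_cast n hn]
  have hsign : (-1 : ℤ) ^ (n + 2 ^ α) = (-1) ^ n := by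
    obtain ⟨β, rfl⟩ : ∃ β, α = β + 1 := ⟨α - 1, by omega⟩
    rw [pow_add]
    have h1 : (2 : ℕ) ^ (β + 1) = 2 * 2 ^ β := by rw [pow_succ]; ring
    rw [h1, pow_mul]
    norm_num
  rw [hsign]
  obtain ⟨c, hc⟩ := SchroederStern.key_dvd n α hn hα
  rcases Nat.even_or_odd n with hpar | hpar
  · rw [hpar.neg_one_pow]
    exact ⟨-c, by linarith [hc]⟩
  · rw [hpar.neg_one_pow]
    refine ⟨c + 1, ?_⟩
    have hp : (2 : ℤ) ^ (α + 1) = 2 * 2 ^ α := by rw [pow_succ]; ring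
    rw [hp] at hc ⊢
    linarith [hc]
end

section
/- For every integer n ≥ 1, ∑_{k=1}^n (1/n)·C(n,k)·C(n,k-1)·2^k = ∑_{k=0}^n C(n+k,2k)·C(2k,k)/(k+1); equivalently, S_n = ∑_{k=1}^n (1/n)·C(n,k)·C(n,k-1)·2^k. -/
open Finset

-- trinomial revision, total
lemma triA (n k : ℕ) : (n + k).choose (2 * k) * (2 * k).choose k = (n + k).choose k * n.choose k := by
  rcases le_or_gt k n with h | h
  · have := Nat.choose_mul (n := n + k) (k := 2 * k) (s := k) (by omega)
    rw [this]
    congr 1 <;> congr 1 <;> omega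
  · rw [Nat.choose_eq_zero_of_lt h, Nat.choose_eq_zero_of_lt (by omega)]
    simp

-- V2
lemma V2 (m i : ℕ) : ∑ j ∈ range (m + 1), m.choose j * j.choose i = m.choose i * 2 ^ (m - i) := by
  rcases le_or_gt i m with h | h
  · have h1 : ∑ j ∈ range (m + 1), m.choose j * j.choose i
        = ∑ j ∈ Ico i (m + 1), m.choose j * j.choose i := by
      rw [range_eq_Ico, ← Finset.sum_Ico_consecutive _ (Nat.zero_le i) (by omega)]
      have : ∑ j ∈ Ico 0 i, m.choose j * j.choose i = 0 := by
        apply Finset.sum_eq_zero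
        intro j hj
        simp only [mem_Ico] at hj
        rw [Nat.choose_eq_zero_of_lt hj.2]; ring
      rw [this, zero_add]
    rw [h1, Finset.sum_Ico_eq_sum_range]
    have h2 : ∀ t ∈ range (m + 1 - i), m.choose (i + t) * (i + t).choose i
        = m.choose i * (m - i).choose t := by
      intro t ht
      simp only [mem_range] at ht
      rw [Nat.choose_mul (by omega)]
      congr 2
      omega
    rw [Finset.sum_congr rfl h2, ← Finset.mul_sum]
    congr 1
    have : m + 1 - i = (m - i) + 1 := by omega
    rw [this, Nat.sum_range_choose]
  · rw [Nat.choose_eq_zero_of_lt h]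
    simp only [zero_mul]
    apply Finset.sum_eq_zero
    intro j hj
    simp only [mem_range] at hj
    rw [Nat.choose_eq_zero_of_lt (show j < i by omega)]; ring
-- Vandermonde variant
lemma V1 (N k : ℕ) : (N + k).choose (k + 1) = ∑ i ∈ range (k + 1), N.choose (i + 1) * k.choose i := by
  rw [Nat.add_choose_eq, Finset.Nat.sum_antidiagonal_eq_sum_range_succ_mk]
  rw [Finset.sum_range_succ']
  simp only [Nat.choose_zero_right, Nat.sub_zero, one_mul]
  rw [Nat.choose_eq_zero_of_lt (show k < k + 1 by omega), add_zero]
  apply Finset.sum_congr rfl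
  intro i hi
  simp only [mem_range] at hi
  congr 1
  rw [show k + 1 - (i + 1) = k - i by omega, Nat.choose_symm (by omega)]

-- ‡
lemma ddag (m j : ℕ) : (j + 2) * (m + 2).choose (j + 2)
    = (m + j + 3) * m.choose (j + 1) + (j + 2) * m.choose j := by
  have hp : (m + 2).choose (j + 2) = m.choose j + 2 * m.choose (j + 1) + m.choose (j + 2) := by
    rw [show m + 2 = (m + 1) + 1 from rfl, Nat.choose_succ_succ (m+1) (j+1),
      Nat.choose_succ_succ m j, Nat.choose_succ_succ m (j + 1)]
    ring
  have hr : m.choose (j + 2) * (j + 2) = m.choose (j + 1) * (m - (j + 1)) :=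
    Nat.choose_succ_right_eq m (j + 1)
  rcases le_or_gt (j + 1) m with h | h
  · have : m + j + 3 = 2 * (j + 2) + (m - (j + 1)) := by omega
    rw [hp, this]
    nlinarith [hr]
  · rw [hp, Nat.choose_eq_zero_of_lt h, Nat.choose_eq_zero_of_lt (show m < j + 2 by omega)]
    ring

-- †
lemma dag (m j : ℕ) : (m + 2).choose (j + 2) * (m + 2 + j).choose (j + 1)
    = m.choose (j + 1) * (m + 3 + j).choose (j + 2) + m.choose j * (m + 2 + j).choose (j + 1) := by
  apply Nat.eq_of_mul_eq_mul_left (show 0 < j + 2 by omega)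
  have hs : (m + j + 3) * (m + 2 + j).choose (j + 1) = (m + 3 + j).choose (j + 2) * (j + 2) := by
    have := Nat.add_one_mul_choose_eq (m + 2 + j) (j + 1)
    rw [show m+2+j+1 = m + 3 + j by omega, show j+1+1 = j + 2 from rfl] at this
    rw [show m + j + 3 = m + 3 + j by omega]
    exact this
  calc (j + 2) * ((m + 2).choose (j + 2) * (m + 2 + j).choose (j + 1))
      = ((j + 2) * (m + 2).choose (j + 2)) * (m + 2 + j).choose (j + 1) := by ring
    _ = ((m + j + 3) * m.choose (j + 1) + (j + 2) * m.choose j) * (m + 2 + j).choose (j + 1) := by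
        rw [ddag]
    _ = m.choose (j + 1) * ((m + j + 3) * (m + 2 + j).choose (j + 1))
        + (j + 2) * (m.choose j * (m + 2 + j).choose (j + 1)) := by ring
    _ = _ := by rw [hs]; ring
lemma Bid (m : ℕ) :
    ∑ k ∈ range (m + 2), (m + 2).choose (k + 1) * (m + 1 + k).choose k
      = 2 * ∑ i ∈ range (m + 2), (m + 2).choose (i + 1) * (m.choose i * 2 ^ (m - i)) := by
  have hB : ∑ k ∈ range (m + 2), (m + 2).choose (k + 1) * (m + 1 + k).choose k
      = 2 * ∑ k ∈ range (m + 1), m.choose k * (m + 2 + k).choose (k + 1) := by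
    rw [Finset.sum_range_succ']
    have e1 : ∀ j ∈ range (m + 1), (m + 2).choose (j + 1 + 1) * (m + 1 + (j + 1)).choose (j + 1)
        = m.choose (j + 1) * (m + 3 + j).choose (j + 2)
          + m.choose j * (m + 2 + j).choose (j + 1) := by
      intro j _
      rw [show m + 1 + (j + 1) = m + 2 + j by omega]
      exact dag m j
    rw [Finset.sum_congr rfl e1, Finset.sum_add_distrib]
    have e2 : ∑ k ∈ range (m + 2), m.choose k * (m + 2 + k).choose (k + 1)
        = ∑ j ∈ range (m + 1), m.choose (j + 1) * (m + 3 + j).choose (j + 2)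
          + (m + 2).choose (0 + 1) * (m + 1 + 0).choose 0 := by
      rw [Finset.sum_range_succ']
      congr 1
      · apply Finset.sum_congr rfl
        intro j _
        rw [show m + 2 + (j + 1) = m + 3 + j by omega]
      · simp
    have e3 : ∑ k ∈ range (m + 2), m.choose k * (m + 2 + k).choose (k + 1)
        = ∑ k ∈ range (m + 1), m.choose k * (m + 2 + k).choose (k + 1) := by
      rw [Finset.sum_range_succ, Nat.choose_eq_zero_of_lt (show m < m + 1 by omega), zero_mul,
        add_zero]
    omega
  rw [hB]
  congr 1
  have e4 : ∀ k ∈ range (m + 1), m.choose k * (m + 2 + k).choose (k + 1)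
      = ∑ i ∈ range (m + 2), m.choose k * ((m + 2).choose (i + 1) * k.choose i) := by
    intro k hk
    simp only [mem_range] at hk
    rw [V1 (m + 2) k, Finset.mul_sum]
    apply Finset.sum_subset (Finset.range_subset_range.mpr (by omega))
    intro i _ hi
    simp only [mem_range, not_lt] at hi
    rw [Nat.choose_eq_zero_of_lt (show k < i by omega)]
    ring
  rw [Finset.sum_congr rfl e4, Finset.sum_comm]
  apply Finset.sum_congr rfl
  intro i _
  rw [← V2 m i, Finset.mul_sum]
  apply Finset.sum_congr rfl
  intro k _
  ring
lemma Q3 (m i : ℕ) : (m + 1) * ((m + 2).choose (i + 1) * m.choose i)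
    = (m + 2) * ((m + 1).choose i * (m + 1).choose (i + 1)) := by
  have h1 := Nat.add_one_mul_choose_eq (m + 1) i
  have h2 := Nat.add_one_mul_choose_eq m i
  calc (m + 1) * ((m + 2).choose (i + 1) * m.choose i)
      = (m + 2).choose (i + 1) * ((m + 1) * m.choose i) := by ring
    _ = (m + 2).choose (i + 1) * ((m + 1).choose (i + 1) * (i + 1)) := by rw [h2]
    _ = ((m + 1 + 1) * (m + 1).choose i) * (m + 1).choose (i + 1) := by rw [h1]; ring
    _ = _ := by ring

theorem schroeder_second_form (n : ℕ) (hn : 1 ≤ n) :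
    (∑ k ∈ Finset.Icc 1 n, (1 / (n : ℚ)) * n.choose k * n.choose (k - 1) * 2 ^ k
        = ∑ k ∈ Finset.range (n + 1), ((n + k).choose (2 * k) * (2 * k).choose k : ℚ) / (k + 1))
      ∧ (schroeder n : ℚ)
        = ∑ k ∈ Finset.Icc 1 n, (1 / (n : ℚ)) * n.choose k * n.choose (k - 1) * 2 ^ k := by
  obtain ⟨m, rfl⟩ : ∃ m, n = m + 1 := ⟨n - 1, by omega⟩
  -- Step 0: the natural-division sum equals the rational sum
  have key0 : (schroeder (m + 1) : ℚ)
      = ∑ k ∈ range (m + 1 + 1), ((m + 1 + k).choose (2 * k) * (2 * k).choose k : ℚ) / (k + 1) := by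
    rw [schroeder, Nat.cast_sum]
    apply Finset.sum_congr rfl
    intro k _
    have hdvd : (k + 1) ∣ (2 * k).choose k := Nat.succ_dvd_centralBinom k
    have hA : (m + 1).choose k * (m + 1 + k).choose k / (k + 1)
        = (m + 1 + k).choose (2 * k) * ((2 * k).choose k / (k + 1)) := by
      rw [← Nat.mul_div_assoc _ hdvd]
      congr 1
      rw [triA (m + 1) k]
      ring
    rw [hA, Nat.cast_mul, Nat.cast_div hdvd (by positivity)]
    push_cast
    ring
  -- Step 1: rewrite each term to C(m+2,k+1)*C(m+1+k,k)/(m+2)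
  have key1 : ∑ k ∈ range (m + 1 + 1), ((m + 1 + k).choose (2 * k) * (2 * k).choose k : ℚ) / (k + 1)
      = (↑(∑ k ∈ range (m + 2), (m + 2).choose (k + 1) * (m + 1 + k).choose k) : ℚ) / (m + 2) := by
    rw [Nat.cast_sum, Finset.sum_div]
    apply Finset.sum_congr rfl
    intro k _
    have h1 : ((m + 1 + k).choose (2 * k) * (2 * k).choose k : ℚ)
        = ((m + 1 + k).choose k : ℚ) * ((m + 1).choose k : ℚ) := by
      exact_mod_cast congrArg (Nat.cast (R := ℚ)) (triA (m + 1) k)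
    have h2 : ((m + 2 : ℕ) : ℚ) * ((m + 1).choose k : ℚ) = ((m + 2).choose (k + 1) : ℚ) * (k + 1) := by
      exact_mod_cast congrArg (Nat.cast (R := ℚ)) (Nat.add_one_mul_choose_eq (m + 1) k)
    rw [h1, div_eq_div_iff (by positivity) (by positivity)]
    push_cast at h2 ⊢
    linear_combination ((m + 1 + k).choose k : ℚ) * h2
  -- Step 2: apply Bid and Q3
  have key2 : (↑(∑ k ∈ range (m + 2), (m + 2).choose (k + 1) * (m + 1 + k).choose k) : ℚ) / (m + 2)
      = ∑ i ∈ range (m + 2),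
          ((m + 1).choose i : ℚ) * ((m + 1).choose (i + 1) : ℚ) * 2 ^ (m - i) * 2 / (m + 1) := by
    rw [Bid m, Nat.cast_mul, Nat.cast_sum, Finset.mul_sum, Finset.sum_div]
    apply Finset.sum_congr rfl
    intro i _
    have h3 : ((m + 1 : ℕ) : ℚ) * (((m + 2).choose (i + 1) : ℚ) * (m.choose i : ℚ))
        = ((m + 2 : ℕ) : ℚ) * (((m + 1).choose i : ℚ) * ((m + 1).choose (i + 1) : ℚ)) := by
      exact_mod_cast congrArg (Nat.cast (R := ℚ)) (Q3 m i)
    rw [div_eq_div_iff (by positivity) (by positivity)]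
    push_cast at h3 ⊢
    linear_combination (2 : ℚ) * 2 ^ (m - i) * h3
  -- Step 3: drop the vanishing last term and reflect the sum
  have key3 : ∑ i ∈ range (m + 2),
        ((m + 1).choose i : ℚ) * ((m + 1).choose (i + 1) : ℚ) * 2 ^ (m - i) * 2 / (m + 1)
      = ∑ i ∈ range (m + 1),
        ((m + 1).choose i : ℚ) * ((m + 1).choose (i + 1) : ℚ) * 2 ^ (m - i) * 2 / (m + 1) := by
    rw [Finset.sum_range_succ, Nat.choose_eq_zero_of_lt (show m + 1 < m + 1 + 1 by omega)]
    norm_num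
  have key4 : ∑ i ∈ range (m + 1),
        ((m + 1).choose i : ℚ) * ((m + 1).choose (i + 1) : ℚ) * 2 ^ (m - i) * 2 / (m + 1)
      = ∑ i ∈ range (m + 1),
        ((m + 1).choose (i + 1) : ℚ) * ((m + 1).choose i : ℚ) * 2 ^ (i + 1) / (m + 1) := by
    rw [← Finset.sum_range_reflect]
    apply Finset.sum_congr rfl
    intro i hi
    simp only [mem_range] at hi
    rw [show m + 1 - 1 - i = m - i by omega]
    rw [show (m + 1).choose (m - i) = (m + 1).choose (i + 1) by
      rw [show m - i = m + 1 - (i + 1) by omega]; exact Nat.choose_symm (by omega)]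
    rw [show (m + 1).choose (m - i + 1) = (m + 1).choose i by
      rw [show m - i + 1 = m + 1 - i by omega]; exact Nat.choose_symm (by omega)]
    rw [show m - (m - i) = i by omega]
    ring
  -- Step 4: convert the Icc sum to a range sum
  have key5 : ∑ k ∈ Finset.Icc 1 (m + 1),
        (1 / ((m + 1 : ℕ) : ℚ)) * (m + 1).choose k * (m + 1).choose (k - 1) * 2 ^ k
      = ∑ i ∈ range (m + 1),
        ((m + 1).choose (i + 1) : ℚ) * ((m + 1).choose i : ℚ) * 2 ^ (i + 1) / (m + 1) := by
    rw [← Finset.Ico_add_one_right_eq_Icc, Finset.sum_Ico_eq_sum_range]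
    apply Finset.sum_congr (by norm_num)
    intro i _
    rw [show 1 + i - 1 = i by omega]
    have : ((m : ℚ) + 1) ≠ 0 := by positivity
    push_cast
    rw [show (1 : ℕ) + i = i + 1 by omega]
    ring
  constructor
  · push_cast at key5 ⊢
    rw [key5, ← key4, ← key3, ← key2, ← key1]
  · push_cast at key0 key5 ⊢
    rw [key0, key1, key2, key3, key4, ← key5]
end

section
/- For all integers n ≥ 1 and 1 ≤ k ≤ n, the number T(n,k) = (1/n)·C(n,k)·C(n,k-1)·2^k is an integer divisible by 2^k. -/
/-- `T n k = (1/n)·C(n,k)·C(n,k-1)·2^k`, which is `2^k` times the Narayana number.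
The natural division is exact since `n ∣ C(n,k)·C(n,k-1)`. -/
def T (n k : ℕ) : ℕ := n.choose k * n.choose (k - 1) * 2 ^ k / n

theorem n_dvd_prod (n k : ℕ) (hn : 1 ≤ n) (hk : 1 ≤ k) (hkn : k ≤ n) :
    n ∣ n.choose k * n.choose (k - 1) := by
  set P := n.choose k * n.choose (k - 1) with hP
  -- k * C(n,k) = n * C(n-1,k-1)
  have key : k * n.choose k = n * (n - 1).choose (k - 1) := by
    have := Nat.add_one_mul_choose_eq (n - 1) (k - 1)
    have h1 : n - 1 + 1 = n := by omega
    have h2 : k - 1 + 1 = k := by omega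
    simp only [Nat.succ_eq_add_one, h1, h2] at this
    rw [mul_comm]
    exact this.symm
  -- (n - k + 1) * C(n,k-1) = k * C(n,k)
  have key2 : (n - k + 1) * n.choose (k - 1) = k * n.choose k := by
    have := Nat.choose_succ_right_eq n (k - 1)
    have h2 : k - 1 + 1 = k := by omega
    rw [h2] at this
    have h3 : n - (k - 1) = n - k + 1 := by omega
    rw [h3] at this
    rw [mul_comm, mul_comm k]
    exact this.symm
  have d1 : n ∣ k * P := by
    rw [hP, ← mul_assoc, key, mul_assoc]
    exact Dvd.intro _ rfl
  have d2 : n ∣ (n - k + 1) * P := by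
    have : (n - k + 1) * P = n * ((n - 1).choose (k - 1) * n.choose k) := by
      rw [hP]
      calc (n - k + 1) * (n.choose k * n.choose (k - 1))
          = ((n - k + 1) * n.choose (k - 1)) * n.choose k := by ring
        _ = (k * n.choose k) * n.choose k := by rw [key2]
        _ = (n * (n - 1).choose (k - 1)) * n.choose k := by rw [key]
        _ = n * ((n - 1).choose (k - 1) * n.choose k) := by ring
    rw [this]
    exact dvd_mul_right _ _
  have dsum : n ∣ (n + 1) * P := by
    have h : (n + 1) * P = k * P + (n - k + 1) * P := by
      have : k + (n - k + 1) = n + 1 := by omega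
      rw [← add_mul, this]
    rw [h]
    exact dvd_add d1 d2
  have := Nat.dvd_sub dsum (Dvd.intro P rfl)
  simpa [add_mul, Nat.add_sub_cancel_left] using this

theorem T_integer_and_div (n k : ℕ) (hn : 1 ≤ n) (hk : 1 ≤ k) (hkn : k ≤ n) :
    n ∣ n.choose k * n.choose (k - 1) * 2 ^ k ∧ 2 ^ k ∣ T n k := by
  have hd := n_dvd_prod n k hn hk hkn
  obtain ⟨m, hm⟩ := hd
  constructor
  · exact Dvd.dvd.mul_right ⟨m, hm⟩ _
  · have : T n k = m * 2 ^ k := by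
      rw [T, hm, mul_assoc, Nat.mul_div_cancel_left _ (by omega : 0 < n)]
    rw [this]
    exact dvd_mul_left _ _
end

section
/- For all integers n ≥ 3 and α ≥ 1, T(n+2^α, 3) ≡ T(n, 3) + (n−1)·2^{α+2} + 2^{2α+1} (mod 2^{α+3}). -/
lemma two_mul_choose_two (n : ℕ) : 2 * n.choose 2 = n * (n - 1) := by
  cases n with
  | zero => rfl
  | succ m =>
    have h := Nat.add_one_mul_choose_eq m 1
    simp only [Nat.choose_one_right] at h
    calc 2 * (m + 1).choose 2 = (m + 1).choose 2 * 2 := by ring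
      _ = Nat.succ m * m := h.symm
      _ = (m + 1) * ((m + 1) - 1) := by simp

lemma six_mul_choose_three (n : ℕ) : 6 * n.choose 3 = n * (n - 1) * (n - 2) := by
  cases n with
  | zero => rfl
  | succ m =>
    have h := Nat.add_one_mul_choose_eq m 2
    have h2 := two_mul_choose_two m
    calc 6 * (m + 1).choose 3 = 2 * ((m + 1).choose 3 * 3) := by ring
      _ = 2 * (Nat.succ m * m.choose 2) := by rw [← h]
      _ = (m + 1) * (2 * m.choose 2) := by rw [Nat.succ_eq_add_one]; ring
      _ = (m + 1) * (m * (m - 1)) := by rw [h2]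
      _ = (m + 1) * ((m + 1) - 1) * ((m + 1) - 2) := by
          simp [Nat.succ_sub_one, Nat.succ_sub_succ, Nat.mul_assoc]

lemma T_three_eq (n : ℕ) (hn : 3 ≤ n) : T n 3 = 4 * (n - 1) * n.choose 3 := by
  have h2 : 2 * n.choose 2 = n * (n - 1) := two_mul_choose_two n
  have hkey : n.choose 3 * n.choose 2 * 2 ^ 3 = n * (4 * (n - 1) * n.choose 3) := by
    have : n.choose 3 * n.choose 2 * 2 ^ 3 = (2 * n.choose 2) * (4 * n.choose 3) := by ring
    rw [this, h2]; ring
  have hn0 : 0 < n := by omega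
  simp only [T]
  rw [hkey, Nat.mul_div_cancel_left _ hn0]

lemma three_mul_T (n : ℕ) (hn : 3 ≤ n) :
    3 * (T n 3 : ℤ) = 2 * (n : ℤ) * ((n : ℤ) - 1) ^ 2 * ((n : ℤ) - 2) := by
  rw [T_three_eq n hn]
  have h1 : (1 : ℕ) ≤ n := by omega
  have h2 : (2 : ℕ) ≤ n := by omega
  have h6 : (6 : ℤ) * n.choose 3 = (n : ℤ) * ((n : ℤ) - 1) * ((n : ℤ) - 2) := by
    have := six_mul_choose_three n
    zify [h1, h2] at this
    linarith
  push_cast [h1]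
  linear_combination 2 * ((n : ℤ) - 1) * h6

theorem T_three_shift (n α : ℕ) (hn : 3 ≤ n) (hα : 1 ≤ α) :
    (T (n + 2 ^ α) 3 : ℤ)
      ≡ (T n 3 : ℤ) + ((n : ℤ) - 1) * 2 ^ (α + 2) + 2 ^ (2 * α + 1) [ZMOD 2 ^ (α + 3)] := by
  obtain ⟨β, rfl⟩ : ∃ β, α = β + 1 := ⟨α - 1, by omega⟩
  set c : ℤ := 2 ^ β with hc
  have hm : (0 : ℤ) < 2 ^ (β + 1 + 3) := by positivity
  have hT1 := three_mul_T (n + 2 ^ (β + 1)) (le_trans hn (Nat.le_add_right _ _))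
  have hT2 := three_mul_T n hn
  have hcast : ((n + 2 ^ (β + 1) : ℕ) : ℤ) = (n : ℤ) + 2 * c := by
    push_cast [hc]; ring
  rw [hcast] at hT1
  have hpow1 : (2 : ℤ) ^ (β + 1 + 3) = 16 * c := by rw [hc]; ring
  have hpow2 : (2 : ℤ) ^ (β + 1 + 2) = 8 * c := by rw [hc]; ring
  have hpow3 : (2 : ℤ) ^ (2 * (β + 1) + 1) = 8 * c ^ 2 := by
    rw [hc, ← pow_mul]; ring
  have h3 : 3 * (T (n + 2 ^ (β + 1)) 3 : ℤ)
      ≡ 3 * ((T n 3 : ℤ) + ((n : ℤ) - 1) * 2 ^ (β + 1 + 2) + 2 ^ (2 * (β + 1) + 1))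
        [ZMOD 2 ^ (β + 1 + 3)] := by
    rw [Int.modEq_iff_dvd, hpow1, hpow2, hpow3]
    refine ⟨-((((n : ℤ) - 1)) ^ 3 + 3 * c * ((n : ℤ) - 1) ^ 2 + 4 * c ^ 2 * ((n : ℤ) - 1)
      + 2 * c ^ 3 - 2 * ((n : ℤ) - 1) - 2 * c), ?_⟩
    linear_combination hT2 - hT1
  have hcop : Int.gcd (2 ^ (β + 1 + 3)) 3 = 1 := by
    rw [Int.gcd]
    simp only [Int.natAbs_pow, Int.natAbs_natCast]
    exact Nat.Coprime.pow_left _ (by norm_num)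
  have h := Int.ModEq.cancel_left_div_gcd hm h3
  rwa [hcop, Nat.cast_one, Int.ediv_one] at h
end

section
/- For all integers n ≥ 0, α ≥ 1, and 1 ≤ k ≤ 2^α, one has C(n+2^α, k) ≡ C(n, k) (mod 2^{α−⌊log₂ k⌋}). -/
open Finset

lemma pow_dvd_choose_pow_of_le {α j k : ℕ} (hj : 1 ≤ j) (hjk : j ≤ k) (hk2 : j ≤ 2 ^ α) :
    2 ^ (α - Nat.log 2 k) ∣ (2 ^ α).choose j := by
  have hj0 : j ≠ 0 := Nat.one_le_iff_ne_zero.mp hj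
  have hmul : emultiplicity 2 ((2 ^ α).choose j) = ((α - multiplicity 2 j : ℕ) : ℕ∞) :=
    Nat.Prime.emultiplicity_choose_prime_pow Nat.prime_two hk2 hj0
  have hle : multiplicity 2 j ≤ Nat.log 2 k := by
    have hdvd : 2 ^ multiplicity 2 j ∣ j := pow_multiplicity_dvd 2 j
    have h2 : 2 ^ multiplicity 2 j ≤ j := Nat.le_of_dvd (Nat.pos_of_ne_zero hj0) hdvd
    have := (Nat.le_log_iff_pow_le (by norm_num) hj0).mpr h2
    exact this.trans (Nat.log_mono_right hjk)
  refine pow_dvd_of_le_emultiplicity ?_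
  rw [hmul]
  exact_mod_cast Nat.sub_le_sub_left hle α

theorem choose_shift_mod (n α k : ℕ) (hα : 1 ≤ α) (hk : 1 ≤ k) (hk' : k ≤ 2 ^ α) :
    (n + 2 ^ α).choose k ≡ n.choose k [MOD 2 ^ (α - Nat.log 2 k)] := by
  rw [Nat.add_choose_eq]
  have hmem : ((k, 0) : ℕ × ℕ) ∈ Finset.HasAntidiagonal.antidiagonal k := by simp
  rw [← Finset.add_sum_erase _ _ hmem]
  simp only [Nat.choose_zero_right, mul_one]
  have hdvd : 2 ^ (α - Nat.log 2 k) ∣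
      ∑ ij ∈ (Finset.HasAntidiagonal.antidiagonal k).erase (k, 0),
        n.choose ij.1 * (2 ^ α).choose ij.2 := by
    refine Finset.dvd_sum fun ij hij => ?_
    have hij' := Finset.mem_of_mem_erase hij
    rw [Finset.HasAntidiagonal.mem_antidiagonal] at hij'
    have hne := Finset.ne_of_mem_erase hij
    have hj1 : 1 ≤ ij.2 := by
      rcases Nat.eq_zero_or_pos ij.2 with h0 | h1
      · exfalso; apply hne
        have : ij.1 = k := by omega
        exact Prod.ext this h0
      · exact h1
    exact Dvd.dvd.mul_left
      (pow_dvd_choose_pow_of_le hj1 (by omega) (by omega)) _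
  calc n.choose k + ∑ ij ∈ (Finset.HasAntidiagonal.antidiagonal k).erase (k, 0),
        n.choose ij.1 * (2 ^ α).choose ij.2
      ≡ n.choose k + 0 [MOD 2 ^ (α - Nat.log 2 k)] :=
        Nat.ModEq.add_left _ ((Nat.modEq_zero_iff_dvd).mpr hdvd)
    _ = n.choose k := by rw [add_zero]
end

section
/- For all integers n ≥ 1, α ≥ 1, and 1 ≤ k ≤ 2^α with k ≤ n, one has T(n+2^α, k) ≡ T(n, k) (mod 2^{α+k−⌊log₂ k⌋}). -/
open Finset

-- 2^(α - log₂ k) divides C(2^α, b) for 1 ≤ b ≤ k ≤ 2^α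
lemma pow_dvd_choose_two_pow (α k b : ℕ) (hb : 1 ≤ b) (hbk : b ≤ k) (hk2 : k ≤ 2 ^ α) :
    2 ^ (α - Nat.log 2 k) ∣ (2 ^ α).choose b := by
  have hb0 : b ≠ 0 := by omega
  set v := b.factorization 2 with hv
  have hvd : 2 ^ v ∣ b := Nat.ordProj_dvd b 2
  have hvb : 2 ^ v ≤ b := Nat.le_of_dvd (by omega) hvd
  have hk0 : k ≠ 0 := by omega
  have hvL : v ≤ Nat.log 2 k := by
    rw [Nat.le_log_iff_pow_le (by norm_num) hk0]
    omega
  have hvα : v ≤ α := by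
    have : (2:ℕ) ^ v ≤ 2 ^ α := by omega
    exact (Nat.pow_le_pow_iff_right (by norm_num)).mp this
  have hkey : 2 ^ α ∣ (2 ^ α).choose b * b := by
    obtain ⟨b', rfl⟩ : ∃ b', b = b' + 1 := ⟨b - 1, by omega⟩
    obtain ⟨a', ha'⟩ : ∃ a', 2 ^ α = a' + 1 := ⟨2 ^ α - 1, by have := Nat.one_le_two_pow (n := α); omega⟩
    rw [ha', ← Nat.add_one_mul_choose_eq]
    exact Dvd.intro _ rfl
  set u := b / 2 ^ v with hu
  have hbu : 2 ^ v * u = b := Nat.ordProj_mul_ordCompl_eq_self b 2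
  have hodd : ¬ (2 ∣ u) := Nat.not_dvd_ordCompl Nat.prime_two hb0
  have h1 : 2 ^ (α - v) ∣ (2 ^ α).choose b * u := by
    have h2 : 2 ^ (α - v) * 2 ^ v ∣ ((2 ^ α).choose b * u) * 2 ^ v := by
      rw [← Nat.pow_add]
      have hevv : α - v + v = α := by omega
      rw [hevv]
      have : (2 ^ α).choose b * b = (2 ^ α).choose b * u * 2 ^ v := by
        rw [mul_assoc, mul_comm u, hbu]
      rw [← this]
      exact hkey
    exact (Nat.mul_dvd_mul_iff_right (Nat.pow_pos (n := v) (by norm_num))).mp h2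
  have hcop : Nat.Coprime (2 ^ (α - v)) u :=
    Nat.Coprime.pow_left _ ((Nat.prime_two.coprime_iff_not_dvd).mpr hodd)
  exact dvd_trans (pow_dvd_pow 2 (by omega)) (hcop.dvd_of_dvd_mul_right h1)

-- shift lemma
lemma choose_shift (α k j n : ℕ) (hj : j ≤ k) (hk : 1 ≤ k) (hk2 : k ≤ 2 ^ α) :
    (2:ℤ) ^ (α - Nat.log 2 k) ∣ ((n + 2 ^ α).choose j : ℤ) - (n.choose j : ℤ) := by
  have hV : (2 ^ α + n).choose j = ∑ ij ∈ antidiagonal j, (2 ^ α).choose ij.1 * n.choose ij.2 :=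
    Nat.add_choose_eq _ _ _
  have hmem : ((0 : ℕ), j) ∈ antidiagonal j := by simp
  have hsplit : (2 ^ α + n).choose j
      = (2 ^ α).choose 0 * n.choose j
        + ∑ ij ∈ (antidiagonal j).erase (0, j), (2 ^ α).choose ij.1 * n.choose ij.2 := by
    rw [hV, ← Finset.add_sum_erase _ _ hmem]
  rw [Nat.add_comm n (2 ^ α), hsplit]
  push_cast
  rw [Nat.choose_zero_right]
  push_cast
  have hre : ∀ x : ℤ, 1 * (n.choose j : ℤ) + x - (n.choose j : ℤ) = x := fun x => by ring
  rw [hre]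
  apply Finset.dvd_sum
  intro ij hij
  have h2 := Finset.mem_of_mem_erase hij
  rw [Finset.HasAntidiagonal.mem_antidiagonal] at h2
  have hne := Finset.ne_of_mem_erase hij
  have hij1 : 1 ≤ ij.1 := by
    rcases Nat.eq_zero_or_pos ij.1 with h | h
    · exfalso; apply hne
      have : ij.2 = j := by omega
      cases ij; simp_all
    · exact h
  have hd : 2 ^ (α - Nat.log 2 k) ∣ (2 ^ α).choose ij.1 :=
    pow_dvd_choose_two_pow α k ij.1 hij1 (by omega) hk2
  exact Dvd.dvd.mul_right (by exact_mod_cast Int.natCast_dvd_natCast.mpr hd) _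


-- determinant identity: n*A^2 = C(n,k)C(n,k-1) + n*B*C2, with n = m+d+2, k = m+2
lemma narayana_det (m d : ℕ) :
    ((m+d+2).choose (m+2) : ℤ) * ((m+d+2).choose (m+1))
      + (m+d+2) * ((m+d+1).choose (m+2)) * ((m+d+1).choose m)
    = (m+d+2) * ((m+d+1).choose (m+1))^2 := by
  have h1n : (m+d+1).choose (m+2) * (m+2) = (m+d+1).choose (m+1) * d := by
    have := Nat.choose_succ_right_eq (m+d+1) (m+1)
    simpa [show m+d+1-(m+1) = d from by omega] using this
  have h2n : (m+d+1).choose (m+1) * (m+1) = (m+d+1).choose m * (d+1) := by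
    have := Nat.choose_succ_right_eq (m+d+1) m
    simpa [show m+d+1-m = d+1 from by omega] using this
  have hp1 : (m+d+2).choose (m+2) = (m+d+1).choose (m+1) + (m+d+1).choose (m+2) := by
    have := Nat.choose_succ_succ (m+d+1) (m+1)
    simpa [show m+d+1+1 = m+d+2 from by omega] using this
  have hp2 : (m+d+2).choose (m+1) = (m+d+1).choose m + (m+d+1).choose (m+1) := by
    have := Nat.choose_succ_succ (m+d+1) m
    simpa [show m+d+1+1 = m+d+2 from by omega] using this
  rw [hp1, hp2]
  have h1 : ((m+d+1).choose (m+2) : ℤ) * (m+2) = ((m+d+1).choose (m+1) : ℤ) * d := by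
    exact_mod_cast h1n
  have h2 : ((m+d+1).choose (m+1) : ℤ) * (m+1) = ((m+d+1).choose m : ℤ) * (d+1) := by
    exact_mod_cast h2n
  set A := ((m+d+1).choose (m+1) : ℤ)
  set B := ((m+d+1).choose (m+2) : ℤ)
  set C2 := ((m+d+1).choose m : ℤ)
  push_cast
  have hc : ((m:ℤ)+2) * ((d:ℤ)+1) ≠ 0 := by positivity
  apply mul_left_cancel₀ hc
  linear_combination (((d:ℤ)+1)*A + ((m:ℤ)+(d:ℤ)+3)*((d:ℤ)+1)*C2) * h1
    - ((A*((m:ℤ)+2)) + ((m:ℤ)+(d:ℤ)+3)*(d:ℤ)*A) * h2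

lemma T_eq (m d : ℕ) :
    (T (m+d+2) (m+2) : ℤ)
      = 2^(m+2) * (((m+d+1).choose (m+1) : ℤ)^2
          - ((m+d+1).choose (m+2)) * ((m+d+1).choose m)) := by
  have hN : (m+d+2).choose (m+2) * ((m+d+2).choose (m+1))
      + (m+d+2) * ((m+d+1).choose (m+2)) * ((m+d+1).choose m)
      = (m+d+2) * ((m+d+1).choose (m+1))^2 := by exact_mod_cast narayana_det m d
  set A := (m+d+1).choose (m+1)
  set B := (m+d+1).choose (m+2)
  set C2 := (m+d+1).choose m
  have hle : B * C2 ≤ A^2 := by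
    have h1 : (m+d+2) * (B * C2) ≤ (m+d+2) * A^2 := by
      calc (m+d+2) * (B * C2) = (m+d+2) * B * C2 := by ring
        _ ≤ _ := by omega
    exact Nat.le_of_mul_le_mul_left h1 (by omega)
  have hP : (m+d+2).choose (m+2) * ((m+d+2).choose (m+1)) = (m+d+2) * (A^2 - B * C2) := by
    have hX : B * C2 + (A^2 - B * C2) = A^2 := by omega
    have hdist : (m+d+2) * (B * C2 + (A^2 - B*C2)) = (m+d+2)*(B*C2) + (m+d+2)*(A^2 - B*C2) :=
      Nat.mul_add _ _ _
    rw [hX] at hdist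
    have hassoc : (m+d+2) * B * C2 = (m+d+2) * (B * C2) := by ring
    omega
  have hT : T (m+d+2) (m+2) = (A^2 - B * C2) * 2^(m+2) := by
    unfold T
    rw [show m+2-1 = m+1 from rfl, hP]
    rw [show (m+d+2) * (A^2 - B*C2) * 2^(m+2) = (m+d+2) * ((A^2 - B*C2) * 2^(m+2)) from by ring]
    exact Nat.mul_div_cancel_left _ (by omega)
  rw [hT]
  push_cast [Nat.cast_sub hle]
  ring

lemma T_one (n : ℕ) (hn : 1 ≤ n) : T n 1 = 2 := by
  unfold T
  rw [Nat.choose_one_right, Nat.choose_zero_right]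
  rw [show n * 1 * 2^1 = n * 2 from by ring]
  exact Nat.mul_div_cancel_left _ (by omega)

theorem T_shift_mod (n α k : ℕ) (hn : 1 ≤ n) (hα : 1 ≤ α) (hk : 1 ≤ k)
    (hk2 : k ≤ 2 ^ α) (hkn : k ≤ n) :
    T (n + 2 ^ α) k ≡ T n k [MOD 2 ^ (α + k - Nat.log 2 k)] := by
  rcases Nat.lt_or_ge k 2 with hk1 | hk2'
  · obtain rfl : k = 1 := by omega
    rw [T_one n hn, T_one (n + 2^α) (by omega)]
  · -- k ≥ 2
    obtain ⟨m, rfl⟩ : ∃ m, k = m + 2 := ⟨k - 2, by omega⟩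
    obtain ⟨d, rfl⟩ : ∃ d, n = m + d + 2 := ⟨n - (m + 2), by omega⟩
    set L := Nat.log 2 (m + 2) with hL
    have hLα : L ≤ α := by
      have h1 : 2 ^ L ≤ m + 2 := Nat.pow_log_le_self 2 (by omega)
      have h2 : (2:ℕ) ^ L ≤ 2 ^ α := by omega
      exact (Nat.pow_le_pow_iff_right (by norm_num)).mp h2
    rw [Nat.modEq_iff_dvd]
    have hshape : m + d + 2 + 2 ^ α = m + (d + 2^α) + 2 := by omega
    rw [hshape, T_eq m d, T_eq m (d + 2^α)]
    have hshape2 : m + (d + 2 ^ α) + 1 = (m + d + 1) + 2 ^ α := by omega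
    rw [hshape2]
    set N := m + d + 1
    set A1 := (N.choose (m+1) : ℤ)
    set B1 := (N.choose (m+2) : ℤ)
    set C1 := (N.choose m : ℤ)
    set A2 := ((N + 2^α).choose (m+1) : ℤ)
    set B2 := ((N + 2^α).choose (m+2) : ℤ)
    set C2 := ((N + 2^α).choose m : ℤ)
    rw [show ((2 ^ (α + (m+2) - L) : ℕ) : ℤ) = 2 ^ (α + (m+2) - L) from by push_cast; ring, show α + (m+2) - L = (m+2) + (α - L) from by omega, pow_add]
    rw [show (2:ℤ)^(m+2) * (A1^2 - B1*C1) - 2^(m+2) * (A2^2 - B2*C2)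
        = 2^(m+2) * ((A1^2 - B1*C1) - (A2^2 - B2*C2)) from by ring]
    apply mul_dvd_mul_left
    have hΔa : (2:ℤ)^(α - L) ∣ A2 - A1 := choose_shift α (m+2) (m+1) N (by omega) (by omega) hk2
    have hΔb : (2:ℤ)^(α - L) ∣ B2 - B1 := choose_shift α (m+2) (m+2) N (by omega) (by omega) hk2
    have hΔc : (2:ℤ)^(α - L) ∣ C2 - C1 := choose_shift α (m+2) m N (by omega) (by omega) hk2
    have hkey : (A1^2 - B1*C1) - (A2^2 - B2*C2)
        = -((A2 - A1)*(A2 + A1)) + ((B2 - B1)*C2 + B1*(C2 - C1)) := by ring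
    rw [hkey]
    exact dvd_add (dvd_neg.mpr (hΔa.mul_right _)) (dvd_add (hΔb.mul_right _) (hΔc.mul_left _))
end

section
/- For all integers n ≥ 0 and α ≥ 2, C(n+2^α, 4) ≡ C(n, 4) + 2^{α−2} (mod 2^{α−1}). -/
private lemma choose2_pow (β : ℕ) :
    (2 ^ (β + 2)).choose 2 = 2 ^ (β + 1) * (2 ^ (β + 2) - 1) := by
  rw [Nat.choose_two_right]
  have h : 2 ^ (β + 2) = 2 * 2 ^ (β + 1) := by ring
  rw [h, mul_assoc, Nat.mul_div_cancel_left _ (by norm_num : 0 < 2)]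

private lemma dvd_choose3 (β : ℕ) : 2 ^ (β + 1) ∣ (2 ^ (β + 2)).choose 3 := by
  have h := Nat.choose_succ_right_eq (2 ^ (β + 2)) 2
  rw [choose2_pow] at h
  have hd : 2 ^ (β + 1) ∣ (2 ^ (β + 2)).choose 3 * 3 := by
    rw [h]; exact dvd_mul_of_dvd_left (dvd_mul_right _ _) _
  exact (Nat.Coprime.pow_left _ (by decide)).dvd_of_dvd_mul_right hd

private lemma choose3_shift (β : ℕ) (n : ℕ) :
    (n + 2 ^ (β + 2)).choose 3 ≡ n.choose 3 [MOD 2 ^ (β + 1)] := by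
  induction n with
  | zero =>
      simpa using (Nat.modEq_zero_iff_dvd).2 (dvd_choose3 β)
  | succ n ih =>
      have h2 : (n + 2 ^ (β + 2)).choose 2 ≡ n.choose 2 [MOD 2 ^ (β + 1)] := by
        clear ih
        induction n with
        | zero =>
            simpa [choose2_pow] using
              (Nat.modEq_zero_iff_dvd).2 (Dvd.intro _ rfl : 2 ^ (β + 1) ∣
                2 ^ (β + 1) * (2 ^ (β + 2) - 1))
        | succ n ih2 =>
            have h1 : (n + 2 ^ (β + 2)).choose 1 ≡ n.choose 1 [MOD 2 ^ (β + 1)] := by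
              simp only [Nat.choose_one_right]
              have : (2 : ℕ) ^ (β + 2) ≡ 0 [MOD 2 ^ (β + 1)] :=
                (Nat.modEq_zero_iff_dvd).2 (pow_dvd_pow 2 (by omega))
              simpa using (Nat.ModEq.refl n).add this
            have e1 : (n + 1 + 2 ^ (β + 2)).choose 2
                = (n + 2 ^ (β + 2)).choose 1 + (n + 2 ^ (β + 2)).choose 2 := by
              rw [show n + 1 + 2 ^ (β + 2) = (n + 2 ^ (β + 2)) + 1 by ring]
              exact Nat.choose_succ_succ _ _
            have e2 : (n + 1).choose 2 = n.choose 1 + n.choose 2 :=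
              Nat.choose_succ_succ _ _
            rw [e1, e2]
            exact h1.add ih2
      have e1 : (n + 1 + 2 ^ (β + 2)).choose 3
          = (n + 2 ^ (β + 2)).choose 2 + (n + 2 ^ (β + 2)).choose 3 := by
        rw [show n + 1 + 2 ^ (β + 2) = (n + 2 ^ (β + 2)) + 1 by ring]
        exact Nat.choose_succ_succ _ _
      have e2 : (n + 1).choose 3 = n.choose 2 + n.choose 3 :=
        Nat.choose_succ_succ _ _
      rw [e1, e2]
      exact h2.add ih

private lemma choose4_pow (β : ℕ) :
    (2 ^ (β + 2)).choose 4 ≡ 2 ^ β [MOD 2 ^ (β + 1)] := by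
  -- 3 * choose4 = 2^β * X with X odd
  have h4 := Nat.choose_succ_right_eq (2 ^ (β + 2)) 3
  have h3 := Nat.choose_succ_right_eq (2 ^ (β + 2)) 2
  rw [choose2_pow] at h3
  -- choose4 * 4 = choose3 * (2^(β+2) - 3)
  -- choose3 * 3 = 2^(β+1)*(2^(β+2)-1) * (2^(β+2) - 2)
  set X : ℕ := (2 ^ (β + 2) - 1) * (2 ^ (β + 1) - 1) * (2 ^ (β + 2) - 3) with hX
  have key : 3 * (2 ^ (β + 2)).choose 4 = 2 ^ β * X := by
    have hsub : 2 ^ (β + 2) - 2 = 2 * (2 ^ (β + 1) - 1) := by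
      have : (2 : ℕ) ^ (β + 2) = 2 * 2 ^ (β + 1) := by ring
      have h1 : (1 : ℕ) ≤ 2 ^ (β + 1) := Nat.one_le_two_pow
      omega
    have h12 : 12 * (2 ^ (β + 2)).choose 4 = 4 * (2 ^ β * X) := by
      calc 12 * (2 ^ (β + 2)).choose 4
          = 3 * ((2 ^ (β + 2)).choose 4 * 4) := by ring
        _ = 3 * ((2 ^ (β + 2)).choose 3 * (2 ^ (β + 2) - 3)) := by rw [h4]
        _ = ((2 ^ (β + 2)).choose 3 * 3) * (2 ^ (β + 2) - 3) := by ring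
        _ = 2 ^ (β + 1) * (2 ^ (β + 2) - 1) * (2 ^ (β + 2) - 2)
              * (2 ^ (β + 2) - 3) := by rw [h3]
        _ = 4 * (2 ^ β * X) := by
              rw [hsub, hX, show (2 : ℕ) ^ (β + 1) = 2 * 2 ^ β by ring]
              ring
    omega
  have hXodd : X % 2 = 1 := by
    have h1 : (4 : ℕ) ≤ 2 ^ (β + 2) := by
      calc (4 : ℕ) = 2 ^ 2 := by norm_num
      _ ≤ 2 ^ (β + 2) := Nat.pow_le_pow_right (by norm_num) (by omega)
    have h2 : (2 : ℕ) ≤ 2 ^ (β + 1) := by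
      calc (2 : ℕ) = 2 ^ 1 := by norm_num
      _ ≤ 2 ^ (β + 1) := Nat.pow_le_pow_right (by norm_num) (by omega)
    have e1 : (2 ^ (β + 2) - 1) % 2 = 1 := by
      have : (2 : ℕ) ^ (β + 2) = 2 * 2 ^ (β + 1) := by ring
      omega
    have e2 : (2 ^ (β + 1) - 1) % 2 = 1 := by
      have : (2 : ℕ) ^ (β + 1) = 2 * 2 ^ β := by ring
      omega
    have e3 : (2 ^ (β + 2) - 3) % 2 = 1 := by
      have : (2 : ℕ) ^ (β + 2) = 2 * 2 ^ (β + 1) := by ring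
      omega
    have m1 : ((2 ^ (β + 2) - 1) * (2 ^ (β + 1) - 1)) % 2 = 1 := by
      rw [Nat.mul_mod, e1, e2]
    rw [hX, Nat.mul_mod, m1, e3]
  have hmod : X ≡ 3 [MOD 2] := by
    unfold Nat.ModEq
    omega
  have h1 : 2 ^ β * X ≡ 2 ^ β * 3 [MOD 2 ^ β * 2] := hmod.mul_left' _
  have h2 : 3 * (2 ^ (β + 2)).choose 4 ≡ 3 * 2 ^ β [MOD 2 ^ (β + 1)] := by
    rw [key]
    have e : (2 : ℕ) ^ (β + 1) = 2 ^ β * 2 := by ring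
    rw [e]
    calc 2 ^ β * X ≡ 2 ^ β * 3 [MOD 2 ^ β * 2] := h1
    _ = 3 * 2 ^ β := by ring
  exact (Nat.ModEq.cancel_left_of_coprime
    (by simpa using (Nat.Coprime.pow_right (β + 1) (by decide : Nat.Coprime 3 2)))) h2

private lemma choose4_shift (β : ℕ) (n : ℕ) :
    (n + 2 ^ (β + 2)).choose 4 ≡ n.choose 4 + 2 ^ β [MOD 2 ^ (β + 1)] := by
  induction n with
  | zero => simpa using choose4_pow β
  | succ n ih =>
      have e1 : (n + 1 + 2 ^ (β + 2)).choose 4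
          = (n + 2 ^ (β + 2)).choose 3 + (n + 2 ^ (β + 2)).choose 4 := by
        rw [show n + 1 + 2 ^ (β + 2) = (n + 2 ^ (β + 2)) + 1 by ring]
        exact Nat.choose_succ_succ _ _
      have e2 : (n + 1).choose 4 = n.choose 3 + n.choose 4 :=
        Nat.choose_succ_succ _ _
      rw [e1, e2]
      calc (n + 2 ^ (β + 2)).choose 3 + (n + 2 ^ (β + 2)).choose 4
          ≡ n.choose 3 + (n.choose 4 + 2 ^ β) [MOD 2 ^ (β + 1)] :=
            (choose3_shift β n).add ih
        _ = n.choose 3 + n.choose 4 + 2 ^ β := by ring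

theorem choose_four_shift (n α : ℕ) (hα : 2 ≤ α) :
    (n + 2 ^ α).choose 4 ≡ n.choose 4 + 2 ^ (α - 2) [MOD 2 ^ (α - 1)] := by
  obtain ⟨β, rfl⟩ : ∃ β, α = β + 2 := ⟨α - 2, by omega⟩
  have h1 : β + 2 - 2 = β := by omega
  have h2 : β + 2 - 1 = β + 1 := by omega
  rw [h1, h2]
  exact choose4_shift β n
end

section
/- For all integers n ≥ 4 and α ≥ 2, T(n+2^α, 4) ≡ T(n, 4) + C(n−1, 2)·2^{α+2} (mod 2^{α+3}). -/
private lemma c2 (m : ℕ) : (m + 2).choose 2 * 2 = (m + 1) * (m + 2) := by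
  induction m with
  | zero => rfl
  | succ k ih =>
    have h : (k + 3).choose 2 = (k + 2).choose 1 + (k + 2).choose 2 :=
      Nat.choose_succ_succ (k + 2) 1
    rw [show k + 1 + 2 = k + 3 by omega, h, Nat.choose_one_right, Nat.add_mul, ih]
    ring

private lemma c3 (m : ℕ) : (m + 3).choose 3 * 6 = (m + 1) * (m + 2) * (m + 3) := by
  induction m with
  | zero => rfl
  | succ k ih =>
    have h : (k + 4).choose 3 = (k + 3).choose 2 + (k + 3).choose 3 :=
      Nat.choose_succ_succ (k + 3) 2
    have h2 : (k + 3).choose 2 * 2 = (k + 2) * (k + 3) := by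
      have := c2 (k + 1)
      rw [show k + 1 + 2 = k + 3 by omega, show k + 1 + 1 = k + 2 by omega] at this
      exact this
    rw [show k + 1 + 3 = k + 4 by omega, h, Nat.add_mul, ih]
    have h6 : (k + 3).choose 2 * 6 = (k + 2) * (k + 3) * 3 := by
      calc (k + 3).choose 2 * 6 = (k + 3).choose 2 * 2 * 3 := by ring
        _ = (k + 2) * (k + 3) * 3 := by rw [h2]
    rw [h6]; ring

private lemma c4 (m : ℕ) : (m + 4).choose 4 * 24 = (m + 1) * (m + 2) * (m + 3) * (m + 4) := by
  induction m with
  | zero => rfl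
  | succ k ih =>
    have h : (k + 5).choose 4 = (k + 4).choose 3 + (k + 4).choose 4 :=
      Nat.choose_succ_succ (k + 4) 3
    have h3 : (k + 4).choose 3 * 6 = (k + 2) * (k + 3) * (k + 4) := by
      have := c3 (k + 1)
      rw [show k + 1 + 3 = k + 4 by omega, show k + 1 + 1 = k + 2 by omega,
        show k + 1 + 2 = k + 3 by omega] at this
      exact this
    rw [show k + 1 + 4 = k + 5 by omega, h, Nat.add_mul, ih]
    have h24 : (k + 4).choose 3 * 24 = (k + 2) * (k + 3) * (k + 4) * 4 := by
      calc (k + 4).choose 3 * 24 = (k + 4).choose 3 * 6 * 4 := by ring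
        _ = (k + 2) * (k + 3) * (k + 4) * 4 := by rw [h3]
    rw [h24]; ring

private lemma h3top (m : ℕ) : (m + 4).choose 3 * 6 = (m + 2) * (m + 3) * (m + 4) := by
  have := c3 (m + 1)
  rw [show m + 1 + 3 = m + 4 by omega, show m + 1 + 1 = m + 2 by omega,
    show m + 1 + 2 = m + 3 by omega] at this
  exact this

private lemma Tval (m : ℕ) : T (m + 4) 4 = 4 * ((m + 4).choose 3 * (m + 3).choose 3) := by
  have key : (m + 4).choose 4 * (m + 4).choose 3 * 2 ^ 4
      = (m + 4) * (4 * ((m + 4).choose 3 * (m + 3).choose 3)) := by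
    apply Nat.eq_of_mul_eq_mul_left (show 0 < 36 by norm_num)
    have h4 := c4 m
    have h3 := h3top m
    have h3' := c3 m
    calc 36 * ((m + 4).choose 4 * (m + 4).choose 3 * 2 ^ 4)
        = ((m + 4).choose 4 * 24) * ((m + 4).choose 3 * 6) * 4 := by ring
      _ = ((m + 1) * (m + 2) * (m + 3) * (m + 4)) * ((m + 2) * (m + 3) * (m + 4)) * 4 := by
          rw [h4, h3]
      _ = (((m + 2) * (m + 3) * (m + 4)) * ((m + 1) * (m + 2) * (m + 3))) * ((m + 4) * 4) := by
          ring
      _ = (((m + 4).choose 3 * 6) * ((m + 3).choose 3 * 6)) * ((m + 4) * 4) := by rw [h3, h3']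
      _ = 36 * ((m + 4) * (4 * ((m + 4).choose 3 * (m + 3).choose 3))) := by ring
  show (m + 4).choose 4 * (m + 4).choose 3 * 2 ^ 4 / (m + 4) = _
  rw [key, Nat.mul_div_cancel_left _ (by omega : 0 < m + 4)]

private lemma nineT (m : ℕ) :
    9 * T (m + 4) 4 = (m + 4) * (m + 3) ^ 2 * (m + 2) ^ 2 * (m + 1) := by
  rw [Tval]
  have h3 := h3top m
  have h3' := c3 m
  calc 9 * (4 * ((m + 4).choose 3 * (m + 3).choose 3))
      = ((m + 4).choose 3 * 6) * ((m + 3).choose 3 * 6) := by ring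
    _ = ((m + 2) * (m + 3) * (m + 4)) * ((m + 1) * (m + 2) * (m + 3)) := by rw [h3, h3']
    _ = (m + 4) * (m + 3) ^ 2 * (m + 2) ^ 2 * (m + 1) := by ring

private lemma hg1 (x : ℤ) :
    (8 : ℤ) ∣ 6 * x ^ 5 - 45 * x ^ 4 + 124 * x ^ 3 - 171 * x ^ 2 + 134 * x - 48 := by
  have h : ∀ y : ZMod 8,
      6 * y ^ 5 - 45 * y ^ 4 + 124 * y ^ 3 - 171 * y ^ 2 + 134 * y - 48 = 0 := by decide
  apply (ZMod.intCast_zmod_eq_zero_iff_dvd _ 8).mp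
  push_cast
  exact h (x : ZMod 8)

private lemma hg2 (x : ℤ) :
    (2 : ℤ) ∣ 15 * x ^ 4 - 90 * x ^ 3 + 186 * x ^ 2 - 153 * x + 40 := by
  have h : ∀ y : ZMod 2,
      15 * y ^ 4 - 90 * y ^ 3 + 186 * y ^ 2 - 153 * y + 40 = 0 := by decide
  apply (ZMod.intCast_zmod_eq_zero_iff_dvd _ 2).mp
  push_cast
  exact h (x : ZMod 2)

theorem T_four_shift (n α : ℕ) (hn : 4 ≤ n) (hα : 2 ≤ α) :
    T (n + 2 ^ α) 4 ≡ T n 4 + (n - 1).choose 2 * 2 ^ (α + 2) [MOD 2 ^ (α + 3)] := by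
  obtain ⟨m, rfl⟩ : ∃ m, n = m + 4 := ⟨n - 4, by omega⟩
  obtain ⟨β, rfl⟩ : ∃ β, α = β + 2 := ⟨α - 2, by omega⟩
  apply Nat.ModEq.cancel_left_of_coprime
    (c := 9) (Nat.Coprime.pow_left _ (by decide : Nat.Coprime 2 9))
  have e1 : m + 4 + 2 ^ (β + 2) = (m + 2 ^ (β + 2)) + 4 := by omega
  have e2 : m + 4 - 1 = m + 3 := by omega
  rw [e1, Nat.mul_add, nineT (m + 2 ^ (β + 2)), nineT m, e2]
  have hc2 : (m + 3).choose 2 * 2 = (m + 2) * (m + 3) := by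
    have := c2 (m + 1)
    rw [show m + 1 + 2 = m + 3 by omega, show m + 1 + 1 = m + 2 by omega] at this
    exact this
  have e3 : 9 * ((m + 3).choose 2 * 2 ^ (β + 2 + 2))
      = 9 * ((m + 2) * (m + 3)) * 2 ^ (β + 3) := by
    calc 9 * ((m + 3).choose 2 * 2 ^ (β + 2 + 2))
        = 9 * ((m + 3).choose 2 * 2) * 2 ^ (β + 3) := by ring
      _ = 9 * ((m + 2) * (m + 3)) * 2 ^ (β + 3) := by rw [hc2]
  rw [e3]
  rw [Nat.modEq_iff_dvd]
  push_cast
  set x : ℤ := (m : ℤ) with hx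
  obtain ⟨a1, ha1⟩ := hg1 (x + 4)
  obtain ⟨a2, ha2⟩ := hg2 (x + 4)
  refine ⟨-(a1 + 2 ^ β * a2 + 2 ^ (2 * β + 1) *
    ((20 * (x + 4) ^ 3 - 90 * (x + 4) ^ 2 + 124 * (x + 4) - 51)
      + (15 * (x + 4) ^ 2 - 45 * (x + 4) + 31) * 2 ^ (β + 2)
      + (6 * (x + 4) - 9) * (2 ^ (β + 2)) ^ 2 + (2 ^ (β + 2)) ^ 3)), ?_⟩
  linear_combination (-(2 : ℤ) ^ (β + 2)) * ha1 - (2 : ℤ) ^ (2 * β + 4) * ha2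
end

section
/- For all integers n ≥ 4 and α ≥ 2, ∑_{k=1}^{4} T(n+2^α, k) ≡ ∑_{k=1}^{4} T(n, k) + (−1)^{⌊(n−1)/2⌋}·2^{α+1} (mod 2^{α+3}). -/
lemma n_dvd_choose_mul (n k : ℕ) (hk : 1 ≤ k) (hkn : k ≤ n) :
    n ∣ n.choose k * n.choose (k - 1) := by
  obtain ⟨j, rfl⟩ : ∃ j, k = j + 1 := ⟨k - 1, by omega⟩
  obtain ⟨p, rfl⟩ : ∃ p, n = p + 1 := ⟨n - 1, by omega⟩
  simp only [Nat.add_sub_cancel]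
  set X := (p + 1).choose (j + 1) * (p + 1).choose j with hX
  have e1 : (p + 1) * p.choose j = (p + 1).choose (j + 1) * (j + 1) :=
    Nat.add_one_mul_choose_eq p j
  have hA : (p + 1) ∣ (j + 1) * X := by
    refine ⟨p.choose j * (p + 1).choose j, ?_⟩
    calc (j + 1) * X = ((p + 1).choose (j + 1) * (j + 1)) * (p + 1).choose j := by
          rw [hX]; ring
      _ = ((p + 1) * p.choose j) * (p + 1).choose j := by rw [e1]
      _ = (p + 1) * (p.choose j * (p + 1).choose j) := by ring
  have e2 : (p + 1).choose (j + 1) * (j + 1) = (p + 1).choose j * (p + 1 - j) :=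
    Nat.choose_succ_right_eq (p + 1) j
  have hB : (p + 1) ∣ (p + 1 - j) * X := by
    refine ⟨(p + 1).choose (j + 1) * p.choose j, ?_⟩
    calc (p + 1 - j) * X
        = ((p + 1).choose j * (p + 1 - j)) * (p + 1).choose (j + 1) := by rw [hX]; ring
      _ = ((p + 1).choose (j + 1) * (j + 1)) * (p + 1).choose (j + 1) := by rw [e2]
      _ = ((p + 1) * p.choose j) * (p + 1).choose (j + 1) := by rw [e1]
      _ = (p + 1) * ((p + 1).choose (j + 1) * p.choose j) := by ring
  set g := Nat.gcd (j + 1) (p + 1 - j) with hg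
  have hgdvd : g ∣ p + 2 := by
    have h1 : g ∣ j + 1 := Nat.gcd_dvd_left _ _
    have h2 : g ∣ p + 1 - j := Nat.gcd_dvd_right _ _
    have : (j + 1) + (p + 1 - j) = p + 2 := by omega
    calc g ∣ (j + 1) + (p + 1 - j) := Nat.dvd_add h1 h2
      _ = p + 2 := this
  have hcop : Nat.Coprime (p + 1) g := by
    refine Nat.Coprime.coprime_dvd_right hgdvd ?_
    show Nat.gcd (p + 1) (p + 2) = 1
    rw [show p + 2 = (p + 1) + 1 from rfl, Nat.gcd_self_add_right, Nat.gcd_one_right]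
  have hgX : (p + 1) ∣ g * X := by
    rw [hg, ← Nat.gcd_mul_right]
    exact Nat.dvd_gcd hA hB
  exact Nat.Coprime.dvd_of_dvd_mul_left hcop hgX

lemma T_mul (n k : ℕ) (hk : 1 ≤ k) (hkn : k ≤ n) :
    n * T n k = n.choose k * n.choose (k - 1) * 2 ^ k :=
  Nat.mul_div_cancel' (Dvd.dvd.mul_right (n_dvd_choose_mul n k hk hkn) _) 

lemma key (n : ℕ) (hn : 4 ≤ n) :
    9 * ((T n 1 + T n 2 + T n 3 + T n 4 : ℕ) : ℤ) =
      (n:ℤ)^6 - 9*(n:ℤ)^5 + 37*(n:ℤ)^4 - 75*(n:ℤ)^3 + 88*(n:ℤ)^2 - 42*(n:ℤ) + 18 := by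
  have h2 := Nat.descFactorial_eq_factorial_mul_choose n 2
  have h3 := Nat.descFactorial_eq_factorial_mul_choose n 3
  have h4 := Nat.descFactorial_eq_factorial_mul_choose n 4
  simp [Nat.descFactorial_succ, Nat.factorial] at h2 h3 h4
  have hT1 : n * T n 1 = n * 2 := by
    rw [T_mul n 1 (by omega) (by omega)]
    simp [Nat.choose_one_right]
  have hT2 := T_mul n 2 (by omega) (by omega)
  have hT3 := T_mul n 3 (by omega) (by omega)
  have hT4 := T_mul n 4 (by omega) (by omega)
  norm_num [Nat.choose_one_right] at hT2 hT3 hT4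
  have c1 : ((n - 1 : ℕ) : ℤ) = (n:ℤ) - 1 := by omega
  have c2 : ((n - 2 : ℕ) : ℤ) = (n:ℤ) - 2 := by omega
  have c3 : ((n - 3 : ℕ) : ℤ) = (n:ℤ) - 3 := by omega
  have H2 : 2 * ((n.choose 2 : ℕ) : ℤ) = ((n:ℤ) - 1) * (n:ℤ) := by
    have := congrArg (Nat.cast : ℕ → ℤ) h2
    push_cast at this
    rw [c1] at this
    linear_combination -this
  have H3 : 6 * ((n.choose 3 : ℕ) : ℤ) = ((n:ℤ) - 2) * (((n:ℤ) - 1) * (n:ℤ)) := by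
    have := congrArg (Nat.cast : ℕ → ℤ) h3
    push_cast at this
    rw [c1, c2] at this
    linear_combination -this
  have H4 : 24 * ((n.choose 4 : ℕ) : ℤ) = ((n:ℤ) - 3) * (((n:ℤ) - 2) * (((n:ℤ) - 1) * (n:ℤ))) := by
    have := congrArg (Nat.cast : ℕ → ℤ) h4
    push_cast at this
    rw [c1, c2, c3] at this
    linear_combination -this
  have HT : (n:ℤ) * ((T n 1 : ℤ) + (T n 2 : ℤ) + (T n 3 : ℤ) + (T n 4 : ℤ)) =
      2 * (n:ℤ) + 4 * (n:ℤ) * ((n.choose 2 : ℕ) : ℤ)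
        + 8 * ((n.choose 3 : ℕ) : ℤ) * ((n.choose 2 : ℕ) : ℤ)
        + 16 * ((n.choose 4 : ℕ) : ℤ) * ((n.choose 3 : ℕ) : ℤ) := by
    have e : n * (T n 1 + T n 2 + T n 3 + T n 4)
        = n * 2 + n.choose 2 * n * 4 + n.choose 3 * n.choose 2 * 8
          + n.choose 4 * n.choose 3 * 16 := by
      rw [Nat.mul_add, Nat.mul_add, Nat.mul_add, hT1, hT2, hT3, hT4]
    have := congrArg (Nat.cast : ℕ → ℤ) e
    push_cast at this
    linear_combination this
  have H23 : 12 * (((n.choose 2 : ℕ) : ℤ) * ((n.choose 3 : ℕ) : ℤ))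
      = (n:ℤ)^2 * ((n:ℤ)-1)^2 * ((n:ℤ)-2) := by
    linear_combination (6 * ((n.choose 3 : ℕ) : ℤ)) * H2 + ((n:ℤ) * ((n:ℤ) - 1)) * H3
  have H34 : 144 * (((n.choose 3 : ℕ) : ℤ) * ((n.choose 4 : ℕ) : ℤ))
      = (n:ℤ)^2 * ((n:ℤ)-1)^2 * ((n:ℤ)-2)^2 * ((n:ℤ)-3) := by
    linear_combination (24 * ((n.choose 4 : ℕ) : ℤ)) * H3 + ((n:ℤ) * ((n:ℤ) - 1) * ((n:ℤ) - 2)) * H4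
  have hnz : (144 * (n:ℤ)) ≠ 0 := by
    have : (n:ℤ) ≠ 0 := by omega
    exact mul_ne_zero (by norm_num) this
  apply mul_left_cancel₀ hnz
  push_cast
  linear_combination 1296 * HT + 2592 * (n:ℤ) * H2 + 864 * H23 + 144 * H34

lemma P1_mod8 (n : ℕ) (hn : 4 ≤ n) :
    ∃ w : ℤ, 6*(n:ℤ)^5 - 45*(n:ℤ)^4 + 148*(n:ℤ)^3 - 225*(n:ℤ)^2 + 176*(n:ℤ) - 42
      - 18*(-1:ℤ)^((n-1)/2) = 8*w := by
  obtain ⟨q, r, hr, rfl⟩ : ∃ q r, r < 4 ∧ n = 4*q + r := ⟨n/4, n%4, by omega, by omega⟩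
  interval_cases r
  · rw [show (4*q + 0 - 1)/2 = 2*q - 1 by omega, Odd.neg_one_pow ⟨q-1, by omega⟩]
    refine ⟨768*(q:ℤ)^5 - 1440*(q:ℤ)^4 + 1184*(q:ℤ)^3 - 450*(q:ℤ)^2 + 88*(q:ℤ) - 3, ?_⟩
    push_cast
    ring
  · rw [show (4*q + 1 - 1)/2 = 2*q by omega, Even.neg_one_pow ⟨q, by omega⟩]
    refine ⟨768*(q:ℤ)^5 - 480*(q:ℤ)^4 + 224*(q:ℤ)^3 + 18*(q:ℤ)^2 + 10*(q:ℤ), ?_⟩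
    push_cast
    ring
  · rw [show (4*q + 2 - 1)/2 = 2*q by omega, Even.neg_one_pow ⟨q, by omega⟩]
    refine ⟨768*(q:ℤ)^5 + 480*(q:ℤ)^4 + 224*(q:ℤ)^3 + 126*(q:ℤ)^2 + 46*(q:ℤ) + 6, ?_⟩
    push_cast
    ring
  · rw [show (4*q + 3 - 1)/2 = 2*q + 1 by omega, Odd.neg_one_pow ⟨q, by omega⟩]
    refine ⟨768*(q:ℤ)^5 + 1440*(q:ℤ)^4 + 1184*(q:ℤ)^3 + 594*(q:ℤ)^2 + 196*(q:ℤ) + 36, ?_⟩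
    push_cast
    ring

lemma sum_Icc14 (m : ℕ) :
    (∑ k ∈ Finset.Icc 1 4, (T m k : ℤ)) = ((T m 1 + T m 2 + T m 3 + T m 4 : ℕ) : ℤ) := by
  rw [show (Finset.Icc 1 4 : Finset ℕ) = {1, 2, 3, 4} by decide]
  push_cast
  simp [Finset.sum_insert, Finset.mem_insert]
  ring

theorem T_sum_first_four (n α : ℕ) (hn : 4 ≤ n) (hα : 2 ≤ α) :
    (∑ k ∈ Finset.Icc 1 4, (T (n + 2 ^ α) k : ℤ))
      ≡ (∑ k ∈ Finset.Icc 1 4, (T n k : ℤ)) + (-1) ^ ((n - 1) / 2) * 2 ^ (α + 1)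
        [ZMOD 2 ^ (α + 3)] := by
  obtain ⟨β, rfl⟩ : ∃ β, α = β + 2 := ⟨α - 2, by omega⟩
  rw [Int.modEq_iff_dvd, sum_Icc14, sum_Icc14]
  set M : ℤ := (2:ℤ)^β with hMdef
  have hp2 : (2:ℤ)^(β+2) = 4*M := by rw [pow_add]; ring
  have hp3 : (2:ℤ)^(β+2+1) = 8*M := by rw [pow_add, pow_add]; ring
  have hp5 : (2:ℤ)^(β+2+3) = 32*M := by rw [pow_add, pow_add]; ring
  have hcop : IsCoprime ((2:ℤ)^(β+2+3)) (9:ℤ) := by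
    apply IsCoprime.pow_left
    rw [Int.isCoprime_iff_gcd_eq_one]
    norm_num
  apply hcop.dvd_of_dvd_mul_left
  have k1 := key n hn
  have k2 := key (n + 2^(β+2)) (hn.trans (Nat.le_add_right n _))
  push_cast at k2
  rw [hp2] at k2
  obtain ⟨w1, hw1⟩ := P1_mod8 n hn
  obtain ⟨v, hv⟩ := Int.even_mul_succ_self ((n:ℤ) - 1)
  have hw2 : 15*(n:ℤ)^4 - 90*(n:ℤ)^3 + 222*(n:ℤ)^2 - 225*(n:ℤ) + 88
      = 2*(15*v*((n:ℤ)^2+(n:ℤ)+1) + (-45*(n:ℤ)^3+111*(n:ℤ)^2-105*(n:ℤ)+44)) := by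
    linear_combination (15*((n:ℤ)^2+(n:ℤ)+1)) * hv
  refine ⟨-(w1 + M*(15*v*((n:ℤ)^2+(n:ℤ)+1) + (-45*(n:ℤ)^3+111*(n:ℤ)^2-105*(n:ℤ)+44))
      + 2*M^2*((20*(n:ℤ)^3-90*(n:ℤ)^2+148*(n:ℤ)-75) + 4*M*(15*(n:ℤ)^2-45*(n:ℤ)+37)
        + 16*M^2*(6*(n:ℤ)-9) + 64*M^3)), ?_⟩
  rw [hp3, hp5]
  push_cast at k1 ⊢
  linear_combination k1 - k2 - (4*M)*hw1 - (16*M^2)*hw2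
end
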